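/- arXiv:2312.14715 — 4 statements merged into one kernel-verified Lean document; each statement's English description precedes it below -/
import Mathlib

section
/- Let A be a real square matrix block-decomposed with m diagonal blocks such that all blocks are zero except the last block row A_{m,1}, ..., A_{m,m} and the last block column A_{1,m}, ..., A_{m,m} (i.e., A_{i,j} = 0 whenever i < m and j < m). If ρ(|A|) < 1, then ρ(|A_{m,m}| + Σ_{i=1}^{m-1} |A_{m,i} A_{i,m}|) < 1. -/
open Matrix Finset

open Polynomial

lemma charpoly_eval_eq {n : Type*} [Fintype n] [DecidableEq n] (M : Matrix n n ℂ) (μ : ℂ) :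
    M.charpoly.eval μ = (μ • (1 : Matrix n n ℂ) - M).det := by
  rw [Matrix.charpoly]
  have h := (RingHom.map_det (Polynomial.evalRingHom μ) (Matrix.charmatrix M)).symm
  simp only [RingHom.mapMatrix_apply] at h
  rw [show Polynomial.eval μ (Matrix.charmatrix M).det
      = (Polynomial.evalRingHom μ) (Matrix.charmatrix M).det from rfl, ← h]
  congr 1
  ext i j
  by_cases hij : i = j
  · subst hij
    simp [Matrix.charmatrix_apply_eq, Matrix.one_apply]
  · simp [Matrix.charmatrix_apply_ne _ _ _ hij, Matrix.one_apply_ne hij]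

lemma isRoot_charpoly_iff_exists {n : Type*} [Fintype n] [DecidableEq n]
    (M : Matrix n n ℂ) (μ : ℂ) :
    M.charpoly.IsRoot μ ↔ ∃ v : n → ℂ, v ≠ 0 ∧ M *ᵥ v = μ • v := by
  rw [Polynomial.IsRoot, charpoly_eval_eq, ← Matrix.exists_mulVec_eq_zero_iff]
  constructor
  · rintro ⟨v, hv, h⟩
    refine ⟨v, hv, ?_⟩
    have := h
    rw [Matrix.sub_mulVec, sub_eq_zero] at this
    rw [← this, Matrix.smul_mulVec, Matrix.one_mulVec]
  · rintro ⟨v, hv, h⟩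
    refine ⟨v, hv, ?_⟩
    rw [Matrix.sub_mulVec, sub_eq_zero, Matrix.smul_mulVec, Matrix.one_mulVec, h]

lemma mem_spectrum_iff_isRoot {n : Type*} [Fintype n] [DecidableEq n]
    (M : Matrix n n ℂ) (μ : ℂ) :
    μ ∈ spectrum ℂ M ↔ M.charpoly.IsRoot μ := by
  rw [spectrum.mem_iff, Polynomial.IsRoot, charpoly_eval_eq, Algebra.algebraMap_eq_smul_one]
  rw [Matrix.isUnit_iff_isUnit_det, isUnit_iff_ne_zero, not_not]

/-- Spectral radius of a real square matrix: the supremum of the absolute values of its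
complex eigenvalues (roots of the characteristic polynomial). -/
noncomputable def specRad {n : Type*} [Fintype n] [DecidableEq n] (A : Matrix n n ℝ) : ℝ :=
  sSup {r : ℝ | ∃ μ : ℂ, ((A.map Complex.ofReal).charpoly).IsRoot μ ∧ r = ‖μ‖}

lemma specRadSet_finite {n : Type*} [Fintype n] [DecidableEq n] (A : Matrix n n ℝ) :
    {r : ℝ | ∃ μ : ℂ, ((A.map Complex.ofReal).charpoly).IsRoot μ ∧ r = ‖μ‖}.Finite := by
  have h1 : {r : ℝ | ∃ μ : ℂ, ((A.map Complex.ofReal).charpoly).IsRoot μ ∧ r = ‖μ‖}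
      = (fun μ : ℂ => ‖μ‖) '' {μ | ((A.map Complex.ofReal).charpoly).IsRoot μ} := by
    ext r; simp [eq_comm, Set.mem_image]
  rw [h1]
  exact (Polynomial.finite_setOf_isRoot
    (Matrix.charpoly_monic (A.map Complex.ofReal)).ne_zero).image _

lemma abs_le_specRad {n : Type*} [Fintype n] [DecidableEq n] (A : Matrix n n ℝ) {μ : ℂ}
    (h : ((A.map Complex.ofReal).charpoly).IsRoot μ) : ‖μ‖ ≤ specRad A :=
  le_csSup (specRadSet_finite A).bddAbove ⟨μ, h, rfl⟩

lemma specRad_lt_one_of_mulVec_lt {n : Type*} [Fintype n] [DecidableEq n]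
    {M : Matrix n n ℝ} (hM : ∀ i j, 0 ≤ M i j)
    {w : n → ℝ} (hw : ∀ i, 0 < w i) (hMw : ∀ i, ∑ j, M i j * w j < w i) :
    specRad M < 1 := by
  set S := {r : ℝ | ∃ μ : ℂ, ((M.map Complex.ofReal).charpoly).IsRoot μ ∧ r = ‖μ‖}
  have key : ∀ r ∈ S, r < 1 := by
    rintro r ⟨μ, hroot, rfl⟩
    obtain ⟨v, hv, hMv⟩ := (isRoot_charpoly_iff_exists _ μ).mp hroot
    obtain ⟨j₀, hj₀⟩ := Function.ne_iff.mp hv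
    have hne : (Finset.univ : Finset n).Nonempty := ⟨j₀, Finset.mem_univ _⟩
    obtain ⟨i₀, -, hi₀⟩ := Finset.exists_max_image Finset.univ
      (fun i => ‖v i‖ / w i) hne
    set c := ‖v i₀‖ / w i₀ with hc
    have hcpos : 0 < c := by
      have h1 : 0 < ‖v j₀‖ / w j₀ :=
        div_pos (norm_pos_iff.mpr (by simpa using hj₀)) (hw j₀)
      exact lt_of_lt_of_le h1 (hi₀ j₀ (Finset.mem_univ _))
    have hle : ∀ j, ‖v j‖ ≤ c * w j := fun j => by
      have := hi₀ j (Finset.mem_univ _)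
      calc ‖v j‖ = ‖v j‖ / w j * w j := by
            rw [div_mul_cancel₀ _ (hw j).ne']
        _ ≤ c * w j := by
            apply mul_le_mul_of_nonneg_right this (hw j).le
    have hvi₀ : ‖v i₀‖ = c * w i₀ := by
      rw [hc, div_mul_cancel₀ _ (hw i₀).ne']
    have hmain : ‖μ‖ * (c * w i₀) < c * w i₀ := by
      have h1 : ‖μ‖ * ‖v i₀‖ = ‖μ * v i₀‖ := by
        rw [norm_mul]
      have h2 : μ * v i₀ = ∑ j, (M.map Complex.ofReal) i₀ j * v j := by
        have := congrFun hMv i₀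
        simp only [Matrix.mulVec, dotProduct, Pi.smul_apply, smul_eq_mul] at this
        rw [this]
      have h3 : ‖∑ j, (M.map Complex.ofReal) i₀ j * v j‖
          ≤ ∑ j, M i₀ j * (c * w j) := by
        refine le_trans (norm_sum_le _ _) (Finset.sum_le_sum fun j _ => ?_)
        rw [norm_mul]
        have : ‖(M.map Complex.ofReal) i₀ j‖ = M i₀ j := by
          simp [Matrix.map_apply, Complex.norm_real, abs_of_nonneg (hM i₀ j)]
        rw [this]
        exact mul_le_mul_of_nonneg_left (hle j) (hM i₀ j)
      have h4 : ∑ j, M i₀ j * (c * w j) = c * ∑ j, M i₀ j * w j := by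
        rw [Finset.mul_sum]; congr 1; ext j; ring
      calc ‖μ‖ * (c * w i₀) = ‖μ * v i₀‖ := by rw [← h1, hvi₀]
        _ ≤ c * ∑ j, M i₀ j * w j := by rw [h2] at *; rw [← h4]; exact h3
        _ < c * w i₀ := by exact mul_lt_mul_of_pos_left (hMw i₀) hcpos
    have hpos : 0 < c * w i₀ := mul_pos hcpos (hw i₀)
    exact lt_of_mul_lt_mul_right (by linarith [hmain]) hpos.le
  rcases Set.eq_empty_or_nonempty S with hS | hS
  · rw [specRad, show {r : ℝ | ∃ μ : ℂ, ((M.map Complex.ofReal).charpoly).IsRoot μ ∧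
      r = ‖μ‖} = S from rfl, hS, Real.sSup_empty]; norm_num
  · have := hS.csSup_mem (specRadSet_finite M)
    exact key _ this

section Gelfand

attribute [local instance] Matrix.linftyOpNormedRing Matrix.linftyOpNormedAlgebra

variable {n : Type*} [Fintype n] [DecidableEq n] [Nonempty n]

@[local instance]
def matCompl : CompleteSpace (Matrix n n ℂ) :=
  inferInstanceAs (CompleteSpace (n → n → ℂ))

lemma exists_pow_rowsum_lt {B : Matrix n n ℝ} (h : specRad B < 1) :
    ∃ N : ℕ, 0 < N ∧ ∀ i, ∑ j, |(B ^ N) i j| < 1 := by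
  set B' := B.map Complex.ofReal with hB'
  have hnt : Nontrivial (Matrix n n ℂ) := inferInstance
  have hspec : spectralRadius ℂ B' < ((1 : NNReal) : ENNReal) := by
    apply spectrum.spectralRadius_lt_of_forall_lt B'
    intro z hz
    have hroot := (mem_spectrum_iff_isRoot B' z).mp hz
    have : ‖z‖ ≤ specRad B := abs_le_specRad B hroot
    have h1 : ‖z‖ < 1 := lt_of_le_of_lt this h
    rw [← NNReal.coe_lt_coe]
    simpa [coe_nnnorm] using h1
  have hgel := spectrum.pow_nnnorm_pow_one_div_tendsto_nhds_spectralRadius B'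
  have hev : ∀ᶠ m : ℕ in Filter.atTop,
      (‖B' ^ m‖₊ : ENNReal) ^ (1 / (m : ℝ)) < 1 := by
    apply hgel.eventually_lt_const
    simpa using hspec
  obtain ⟨N₀, hN₀⟩ := Filter.eventually_atTop.mp hev
  set N := max N₀ 1
  have hN1 : 0 < N := lt_of_lt_of_le Nat.one_pos (le_max_right _ _)
  have hlt := hN₀ N (le_max_left _ _)
  have hnorm : ‖B' ^ N‖₊ < 1 := by
    by_contra hge
    push_neg at hge
    have : (1 : ENNReal) ≤ (‖B' ^ N‖₊ : ENNReal) ^ (1 / (N : ℝ)) := by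
      apply ENNReal.one_le_rpow
      · exact_mod_cast hge
      · positivity
    exact absurd hlt (not_lt.mpr this)
  refine ⟨N, hN1, fun i => ?_⟩
  have hpow : B' ^ N = (B ^ N).map Complex.ofReal := by
    rw [hB']
    have : B.map Complex.ofReal = Complex.ofRealHom.mapMatrix B := rfl
    rw [this, ← map_pow]
    rfl
  have hrow : (∑ j, ‖(B' ^ N) i j‖₊) ≤ ‖B' ^ N‖₊ := by
    rw [Matrix.linfty_opNNNorm_def]
    exact Finset.le_sup (f := fun i => ∑ j, ‖(B' ^ N) i j‖₊) (Finset.mem_univ i)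
  have hrowlt : (∑ j, ‖(B' ^ N) i j‖₊) < 1 := lt_of_le_of_lt hrow hnorm
  have : ∑ j, |(B ^ N) i j| = ((∑ j, ‖(B' ^ N) i j‖₊ : NNReal) : ℝ) := by
    push_cast
    refine Finset.sum_congr rfl fun j _ => ?_
    rw [hpow]
    simp [Matrix.map_apply, Complex.norm_real]
  rw [this]
  exact_mod_cast hrowlt

end Gelfand

lemma specRad_of_isEmpty {n : Type*} [Fintype n] [DecidableEq n] [IsEmpty n]
    (M : Matrix n n ℝ) : specRad M = 0 := by
  have h : {r : ℝ | ∃ μ : ℂ, ((M.map Complex.ofReal).charpoly).IsRoot μ ∧ r = ‖μ‖}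
      = ∅ := by
    ext r
    simp only [Set.mem_setOf_eq, Set.mem_empty_iff_false, iff_false, not_exists]
    rintro μ ⟨hroot, -⟩
    obtain ⟨v, hv, -⟩ := (isRoot_charpoly_iff_exists _ μ).mp hroot
    exact hv (Subsingleton.elim v 0)
  rw [specRad, h, Real.sSup_empty]

/-- Let `A` be a square matrix block-decomposed with `m` diagonal blocks (here the first
`m - 1` blocks are indexed by `Σ i : Fin k, Fin (s i)` and the last block by `Fin q`) such
that `A_{i,j} = 0` whenever both `i < m` and `j < m`.  If `ρ(|A|) < 1` then
`ρ(|A_{m,m}| + ∑_{i=1}^{m-1} |A_{m,i} A_{i,m}|) < 1`. -/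
theorem specRad_abs_block_arrow_reduction
    (k q : ℕ) (s : Fin k → ℕ)
    (A : Matrix ((Σ i : Fin k, Fin (s i)) ⊕ Fin q) ((Σ i : Fin k, Fin (s i)) ⊕ Fin q) ℝ)
    (hzero : ∀ (i j : Fin k) (a : Fin (s i)) (b : Fin (s j)),
      A (Sum.inl ⟨i, a⟩) (Sum.inl ⟨j, b⟩) = 0)
    (hρ : specRad (Matrix.of fun x y => |A x y|) < 1) :
    specRad (Matrix.of fun a b : Fin q =>
        |A (Sum.inr a) (Sum.inr b)| +
          ∑ i : Fin k,
            |∑ c : Fin (s i), A (Sum.inr a) (Sum.inl ⟨i, c⟩) * A (Sum.inl ⟨i, c⟩) (Sum.inr b)|)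
      < 1 := by
  classical
  rcases Nat.eq_zero_or_pos q with hq | hq
  · subst hq
    rw [specRad_of_isEmpty]
    norm_num
  haveI : Nonempty ((Σ i : Fin k, Fin (s i)) ⊕ Fin q) := ⟨Sum.inr ⟨0, hq⟩⟩
  set B : Matrix ((Σ i : Fin k, Fin (s i)) ⊕ Fin q) ((Σ i : Fin k, Fin (s i)) ⊕ Fin q) ℝ :=
    Matrix.of fun x y => |A x y| with hB
  have hBnn : ∀ x y, 0 ≤ B x y := fun x y => abs_nonneg _
  have hpownn : ∀ t x y, 0 ≤ (B ^ t) x y := by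
    intro t
    induction t with
    | zero => intro x y; rw [pow_zero, Matrix.one_apply]; split <;> norm_num
    | succ t ih =>
      intro x y
      rw [pow_succ, Matrix.mul_apply]
      exact Finset.sum_nonneg fun j _ => mul_nonneg (ih x j) (hBnn j y)
  obtain ⟨N, hNpos, hN⟩ := exists_pow_rowsum_lt hρ
  set w : ((Σ i : Fin k, Fin (s i)) ⊕ Fin q) → ℝ :=
    fun x => ∑ t ∈ Finset.range N, ∑ j, (B ^ t) x j with hw
  have h0 : ∀ x, ∑ j, (B ^ 0) x j = 1 := by
    intro x
    simp [Matrix.one_apply]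
  have hw1 : ∀ x, 1 ≤ w x := by
    intro x
    have := Finset.single_le_sum (f := fun t => ∑ j, (B ^ t) x j)
      (fun t _ => Finset.sum_nonneg fun j _ => hpownn t x j)
      (Finset.mem_range.mpr hNpos)
    exact le_trans (le_of_eq (h0 x).symm) this
  have hwpos : ∀ x, 0 < w x := fun x => lt_of_lt_of_le one_pos (hw1 x)
  have key : ∀ x, ∑ y, B x y * w y = w x - 1 + ∑ j, (B ^ N) x j := by
    intro x
    calc ∑ y, B x y * w y
        = ∑ y, ∑ t ∈ Finset.range N, ∑ j, B x y * (B ^ t) y j := by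
          refine Finset.sum_congr rfl fun y _ => ?_
          rw [hw, Finset.mul_sum]
          exact Finset.sum_congr rfl fun t _ => Finset.mul_sum _ _ _
      _ = ∑ t ∈ Finset.range N, ∑ j, ∑ y, B x y * (B ^ t) y j := by
          rw [Finset.sum_comm]
          exact Finset.sum_congr rfl fun t _ => Finset.sum_comm
      _ = ∑ t ∈ Finset.range N, ∑ j, (B ^ (t + 1)) x j := by
          refine Finset.sum_congr rfl fun t _ => Finset.sum_congr rfl fun j _ => ?_
          rw [pow_succ', Matrix.mul_apply]
      _ = (∑ t ∈ Finset.range (N + 1), ∑ j, (B ^ t) x j) - ∑ j, (B ^ 0) x j := by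
          rw [Finset.sum_range_succ']
          ring
      _ = w x - 1 + ∑ j, (B ^ N) x j := by
          rw [Finset.sum_range_succ, h0 x]
          simp only [hw]
          ring
  have hBw : ∀ x, ∑ y, B x y * w y < w x := by
    intro x
    rw [key x]
    have h1 : ∑ j, (B ^ N) x j < 1 :=
      lt_of_le_of_lt (Finset.sum_le_sum fun j _ => le_abs_self _) (hN x)
    linarith
  have hcol : ∀ c : Σ i : Fin k, Fin (s i),
      ∑ b, B (Sum.inl c) (Sum.inr b) * w (Sum.inr b) ≤ w (Sum.inl c) := by
    intro c
    have h1 := (hBw (Sum.inl c)).le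
    rw [Fintype.sum_sum_type] at h1
    have hz : ∀ c' : Σ i : Fin k, Fin (s i), B (Sum.inl c) (Sum.inl c') = 0 := by
      rintro ⟨i', a'⟩
      obtain ⟨i, a⟩ := c
      simp [hB, hzero i i' a a']
    simp only [hz, zero_mul, Finset.sum_const_zero, zero_add] at h1
    exact h1
  apply specRad_lt_one_of_mulVec_lt
    (M := Matrix.of fun a b : Fin q =>
        |A (Sum.inr a) (Sum.inr b)| +
          ∑ i : Fin k,
            |∑ c : Fin (s i), A (Sum.inr a) (Sum.inl ⟨i, c⟩) * A (Sum.inl ⟨i, c⟩) (Sum.inr b)|)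
    (fun a b => add_nonneg (abs_nonneg _) (Finset.sum_nonneg fun i _ => abs_nonneg _))
    (w := fun b => w (Sum.inr b)) (fun b => hwpos _)
  intro a
  have step1 : ∀ b : Fin q,
      (∑ i : Fin k,
        |∑ c : Fin (s i), A (Sum.inr a) (Sum.inl ⟨i, c⟩) * A (Sum.inl ⟨i, c⟩) (Sum.inr b)|)
        * w (Sum.inr b)
      ≤ ∑ i : Fin k, ∑ c : Fin (s i),
          |A (Sum.inr a) (Sum.inl ⟨i, c⟩)| * (|A (Sum.inl ⟨i, c⟩) (Sum.inr b)| * w (Sum.inr b)) := by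
    intro b
    have h1 : (∑ i : Fin k,
        |∑ c : Fin (s i), A (Sum.inr a) (Sum.inl ⟨i, c⟩) * A (Sum.inl ⟨i, c⟩) (Sum.inr b)|)
        ≤ ∑ i : Fin k, ∑ c : Fin (s i),
            |A (Sum.inr a) (Sum.inl ⟨i, c⟩)| * |A (Sum.inl ⟨i, c⟩) (Sum.inr b)| := by
      refine Finset.sum_le_sum fun i _ => ?_
      refine le_trans (Finset.abs_sum_le_sum_abs _ _) (le_of_eq ?_)
      exact Finset.sum_congr rfl fun c _ => abs_mul _ _
    calc (∑ i : Fin k,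
        |∑ c : Fin (s i), A (Sum.inr a) (Sum.inl ⟨i, c⟩) * A (Sum.inl ⟨i, c⟩) (Sum.inr b)|)
        * w (Sum.inr b)
        ≤ (∑ i : Fin k, ∑ c : Fin (s i),
            |A (Sum.inr a) (Sum.inl ⟨i, c⟩)| * |A (Sum.inl ⟨i, c⟩) (Sum.inr b)|) * w (Sum.inr b) :=
          mul_le_mul_of_nonneg_right h1 (hwpos _).le
      _ = ∑ i : Fin k, ∑ c : Fin (s i),
            |A (Sum.inr a) (Sum.inl ⟨i, c⟩)| * (|A (Sum.inl ⟨i, c⟩) (Sum.inr b)| * w (Sum.inr b)) := by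
          rw [Finset.sum_mul]
          refine Finset.sum_congr rfl fun i _ => ?_
          rw [Finset.sum_mul]
          exact Finset.sum_congr rfl fun c _ => by ring
  have step2 : ∑ b : Fin q, ∑ i : Fin k, ∑ c : Fin (s i),
        |A (Sum.inr a) (Sum.inl ⟨i, c⟩)| * (|A (Sum.inl ⟨i, c⟩) (Sum.inr b)| * w (Sum.inr b))
      = ∑ c' : Σ i : Fin k, Fin (s i),
          B (Sum.inr a) (Sum.inl c') * (∑ b, B (Sum.inl c') (Sum.inr b) * w (Sum.inr b)) := by
    rw [← Finset.univ_sigma_univ, Finset.sum_sigma]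
    rw [Finset.sum_comm]
    refine Finset.sum_congr rfl fun i _ => ?_
    rw [Finset.sum_comm]
    refine Finset.sum_congr rfl fun c _ => ?_
    rw [Finset.mul_sum]
    rfl
  calc ∑ b : Fin q, (Matrix.of fun a b : Fin q =>
        |A (Sum.inr a) (Sum.inr b)| +
          ∑ i : Fin k,
            |∑ c : Fin (s i), A (Sum.inr a) (Sum.inl ⟨i, c⟩) * A (Sum.inl ⟨i, c⟩) (Sum.inr b)|)
          a b * w (Sum.inr b)
      = ∑ b : Fin q, |A (Sum.inr a) (Sum.inr b)| * w (Sum.inr b)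
        + ∑ b : Fin q, (∑ i : Fin k,
            |∑ c : Fin (s i), A (Sum.inr a) (Sum.inl ⟨i, c⟩) * A (Sum.inl ⟨i, c⟩) (Sum.inr b)|)
            * w (Sum.inr b) := by
        rw [← Finset.sum_add_distrib]
        refine Finset.sum_congr rfl fun b _ => ?_
        simp only [Matrix.of_apply]
        ring
    _ ≤ ∑ b : Fin q, B (Sum.inr a) (Sum.inr b) * w (Sum.inr b)
        + ∑ c' : Σ i : Fin k, Fin (s i),
            B (Sum.inr a) (Sum.inl c') * (∑ b, B (Sum.inl c') (Sum.inr b) * w (Sum.inr b)) := by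
        rw [← step2]
        exact add_le_add_right (Finset.sum_le_sum fun b _ => step1 b) _
    _ ≤ ∑ b : Fin q, B (Sum.inr a) (Sum.inr b) * w (Sum.inr b)
        + ∑ c' : Σ i : Fin k, Fin (s i), B (Sum.inr a) (Sum.inl c') * w (Sum.inl c') := by
        refine add_le_add_right (Finset.sum_le_sum fun c' _ => ?_) _
        exact mul_le_mul_of_nonneg_left (hcol c') (hBnn _ _)
    _ = ∑ y, B (Sum.inr a) y * w y := by
        rw [Fintype.sum_sum_type]
        ring
    _ < w (Sum.inr a) := hBw _
end

section
/- Let A be a real 2×2-block square matrix A = [[0, A_{1,2}], [A_{2,1}, A_{2,2}]]. If ρ(|A|) < 1 then ρ(|A_{2,2}| + |A_{2,1} A_{1,2}|) < 1. -/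
open Matrix Finset

open Polynomial Filter

attribute [local instance] Matrix.linftyOpNormedRing Matrix.linftyOpNormedAlgebra

lemma charpoly_eval_eq_det {n : Type*} [Fintype n] [DecidableEq n] (M : Matrix n n ℂ) (μ : ℂ) :
    M.charpoly.eval μ = (Matrix.scalar n μ - M).det := by
  rw [Matrix.charpoly, _root_.eval_det, matPolyEquiv_charmatrix]
  simp

lemma specRad_lt_one_of_vec {n : Type*} [Fintype n] [DecidableEq n]
    (C : Matrix n n ℝ) (hC : ∀ i j, 0 ≤ C i j) (v : n → ℝ) (hv : ∀ i, 0 < v i)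
    (hCv : ∀ i, (C *ᵥ v) i < v i) :
    sSup {r : ℝ | ∃ μ : ℂ, ((C.map Complex.ofReal).charpoly).IsRoot μ ∧ r = ‖μ‖} < 1 := by
  set M := C.map Complex.ofReal with hM
  set S := {r : ℝ | ∃ μ : ℂ, M.charpoly.IsRoot μ ∧ r = ‖μ‖} with hS
  rcases Set.eq_empty_or_nonempty S with h | h
  · rw [h, Real.sSup_empty]; norm_num
  have key : ∀ r ∈ S, ∃ (hn : Nonempty n),
      r ≤ (univ.sup' (@univ_nonempty _ _ hn) fun i => (C *ᵥ v) i / v i) := by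
    rintro r ⟨μ, hroot, rfl⟩
    have hdet : (Matrix.scalar n μ - M).det = 0 := by
      rw [← charpoly_eval_eq_det]; exact hroot
    obtain ⟨w, hw0, hw⟩ := (Matrix.exists_mulVec_eq_zero_iff).mpr hdet
    obtain ⟨j0, hj0⟩ := Function.ne_iff.mp hw0
    have hn : Nonempty n := ⟨j0⟩
    refine ⟨hn, ?_⟩
    set c := (univ.sup' (@univ_nonempty _ _ hn) fun i => (C *ᵥ v) i / v i) with hc
    -- eigen equation
    rw [Matrix.sub_mulVec, sub_eq_zero] at hw
    have heig : ∀ i, μ * w i = ∑ j, (C i j : ℂ) * w j := by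
      intro i
      have h1 := congrFun hw i
      rw [Matrix.scalar_apply, Matrix.mulVec_diagonal] at h1
      rw [h1]
      simp [Matrix.mulVec, dotProduct, hM, Matrix.map_apply]
    -- choose maximizing index
    obtain ⟨i, -, hi⟩ := Finset.exists_max_image (univ : Finset n)
      (fun j => ‖w j‖ / v j) ⟨j0, mem_univ _⟩
    have hti : 0 < ‖w i‖ / v i := by
      have h2 : 0 < ‖w j0‖ / v j0 :=
        div_pos (by simpa using hj0) (hv j0)
      exact lt_of_lt_of_le h2 (hi j0 (mem_univ _))
    set t := ‖w i‖ / v i with ht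
    have hwle : ∀ j, ‖w j‖ ≤ t * v j := by
      intro j
      have := hi j (mem_univ _)
      rwa [div_le_iff₀ (hv j)] at this
    have hCvc : ∀ j, (C *ᵥ v) j ≤ c * v j := by
      intro j
      have h5 := Finset.le_sup' (fun j => (C *ᵥ v) j / v j) (mem_univ j)
      rw [div_le_iff₀ (hv j)] at h5
      exact h5
    -- main estimate
    have hmain : ‖μ‖ * (t * v i) ≤ c * (t * v i) := by
      have habs : ‖μ‖ * ‖w i‖ ≤ ∑ j, C i j * ‖w j‖ := by
        rw [← norm_mul, heig i]
        refine le_trans (norm_sum_le _ _) ?_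
        exact Finset.sum_le_sum fun j _ => by
          rw [norm_mul, Complex.norm_real, Real.norm_eq_abs, abs_of_nonneg (hC i j)]
      have h3 : ∑ j, C i j * ‖w j‖ ≤ t * (C *ᵥ v) i := by
        rw [Matrix.mulVec, dotProduct, Finset.mul_sum]
        refine Finset.sum_le_sum fun j _ => ?_
        calc C i j * ‖w j‖ ≤ C i j * (t * v j) :=
              mul_le_mul_of_nonneg_left (hwle j) (hC i j)
          _ = t * (C i j * v j) := by ring
      have h4 : t * (C *ᵥ v) i ≤ t * (c * v i) :=
        mul_le_mul_of_nonneg_left (hCvc i) (le_of_lt (lt_of_lt_of_le hti (le_refl t)))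
      have hgi : ‖w i‖ = t * v i := by
        rw [ht, div_mul_cancel₀]; exact ne_of_gt (hv i)
      calc ‖μ‖ * (t * v i) = ‖μ‖ * ‖w i‖ := by rw [hgi]
        _ ≤ ∑ j, C i j * ‖w j‖ := habs
        _ ≤ t * (C *ᵥ v) i := h3
        _ ≤ t * (c * v i) := h4
        _ = c * (t * v i) := by ring
    have htv : 0 < t * v i := mul_pos hti (hv i)
    exact le_of_mul_le_mul_right (by linarith [hmain]) htv
  obtain ⟨r0, hr0⟩ := h
  obtain ⟨hn, -⟩ := key r0 hr0
  have hclt : (univ.sup' (@univ_nonempty _ _ hn) fun i => (C *ᵥ v) i / v i) < 1 := by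
    rw [Finset.sup'_lt_iff]
    intro i _
    rw [div_lt_one (hv i)]
    exact hCv i
  refine lt_of_le_of_lt (csSup_le ⟨r0, hr0⟩ ?_) hclt
  intro r hr
  obtain ⟨hn2, hle⟩ := key r hr
  exact hle

lemma pow_entries_nonneg {m : Type*} [Fintype m] (B : Matrix m m ℝ)
    (hB : ∀ i j, 0 ≤ B i j) [DecidableEq m] : ∀ (k : ℕ) (i j : m), 0 ≤ (B ^ k) i j := by
  intro k
  induction k with
  | zero => intro i j; simp [Matrix.one_apply]; split <;> norm_num
  | succ k ih =>
    intro i j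
    rw [pow_succ, Matrix.mul_apply]
    exact Finset.sum_nonneg fun l _ => mul_nonneg (ih i l) (hB l j)

lemma exists_pos_vec {m : Type*} [Fintype m] [DecidableEq m] (B : Matrix m m ℝ)
    (hB : ∀ i j, 0 ≤ B i j)
    (h : sSup {r : ℝ | ∃ μ : ℂ, ((B.map Complex.ofReal).charpoly).IsRoot μ ∧ r = ‖μ‖} < 1) :
    ∃ v : m → ℝ, (∀ i, 0 < v i) ∧ ∀ i, (B *ᵥ v) i < v i := by
  classical
  set M := B.map Complex.ofReal with hMdef
  set S := {r : ℝ | ∃ μ : ℂ, M.charpoly.IsRoot μ ∧ r = ‖μ‖} with hSdef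
  -- S is bounded above
  have hfin : S.Finite := by
    have h1 : ({μ : ℂ | M.charpoly.IsRoot μ}).Finite :=
      Polynomial.finite_setOf_isRoot (M.charpoly_monic.ne_zero)
    have h2 : S ⊆ (fun μ : ℂ => ‖μ‖) '' {μ : ℂ | M.charpoly.IsRoot μ} := by
      rintro r ⟨μ, hμ, rfl⟩; exact ⟨μ, hμ, rfl⟩
    exact (h1.image _).subset h2
  have hroot_lt : ∀ μ : ℂ, M.charpoly.IsRoot μ → ‖μ‖ < 1 := by
    intro μ hμ
    have : ‖μ‖ ∈ S := ⟨μ, hμ, rfl⟩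
    exact lt_of_le_of_lt (le_csSup hfin.bddAbove this) h
  -- spectral radius bound
  have hspec : spectralRadius ℂ M < 1 := by
    have hub : spectralRadius ℂ M ≤ ENNReal.ofReal (sSup S ⊔ 0) := by
      refine iSup₂_le fun μ hμ => ?_
      have hroot : M.charpoly.IsRoot μ := by
        by_contra hcon
        have hdet : (Matrix.scalar _ μ - M).det ≠ 0 := by
          rw [← charpoly_eval_eq_det]; exact hcon
        have : IsUnit (algebraMap ℂ (Matrix m m ℂ) μ - M) := by
          rw [Matrix.isUnit_iff_isUnit_det]
          exact (isUnit_iff_ne_zero).mpr hdet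
        exact (spectrum.mem_iff.mp hμ) this
      have habs : ‖μ‖ ≤ sSup S :=
        le_csSup hfin.bddAbove ⟨μ, hroot, rfl⟩
      rw [← enorm_eq_nnnorm, ← ofReal_norm]
      exact ENNReal.ofReal_le_ofReal
        (le_trans le_rfl (le_trans habs le_sup_left))
    refine lt_of_le_of_lt hub ?_
    rw [show (1 : ENNReal) = ENNReal.ofReal 1 by simp]
    rw [ENNReal.ofReal_lt_ofReal_iff one_pos]
    exact max_lt h one_pos
  -- complete space
  haveI : CompleteSpace (Matrix m m ℂ) := FiniteDimensional.complete ℂ _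
  have hT := spectrum.pow_nnnorm_pow_one_div_tendsto_nhds_spectralRadius M
  obtain ⟨k, hk1, hkge⟩ := ((hT.eventually_lt_const hspec).and (eventually_ge_atTop 1)).exists
  -- ‖M ^ k‖₊ < 1
  have hnorm : ‖M ^ k‖₊ < 1 := by
    rw [← ENNReal.coe_lt_one_iff]
    by_contra hcon
    push_neg at hcon
    have : (1 : ENNReal) ≤ ((‖M ^ k‖₊ : ENNReal)) ^ (1 / (k : ℝ)) := by
      calc (1 : ENNReal) = 1 ^ (1 / (k : ℝ)) := by rw [ENNReal.one_rpow]
        _ ≤ ((‖M ^ k‖₊ : ENNReal)) ^ (1 / (k : ℝ)) :=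
          ENNReal.rpow_le_rpow hcon (by positivity)
    exact absurd hk1 (not_lt.mpr this)
  -- row sums of B ^ k are < 1
  have hpowmap : M ^ k = (B ^ k).map Complex.ofReal := by
    have e0 : B.map Complex.ofReal = Complex.ofRealHom.mapMatrix B := rfl
    have e0' : (B ^ k).map Complex.ofReal = Complex.ofRealHom.mapMatrix (B ^ k) := rfl
    rw [hMdef, e0, e0', ← map_pow]
  have hrow : ∀ i, ∑ j, (B ^ k) i j < 1 := by
    intro i
    have h6 : (∑ j, ‖(M ^ k) i j‖₊) ≤ ‖M ^ k‖₊ := by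
      rw [Matrix.linfty_opNNNorm_def]
      exact Finset.le_sup (f := fun i => ∑ j, ‖(M ^ k) i j‖₊) (mem_univ i)
    have h7 : ∑ j, ‖(M ^ k) i j‖₊ < 1 := lt_of_le_of_lt h6 hnorm
    have h8 : ((∑ j, ‖(M ^ k) i j‖₊ : NNReal) : ℝ) = ∑ j, (B ^ k) i j := by
      push_cast
      refine Finset.sum_congr rfl fun j _ => ?_
      rw [hpowmap, Matrix.map_apply, Complex.norm_real,
        Real.norm_eq_abs, abs_of_nonneg (pow_entries_nonneg B hB k i j)]
    calc ∑ j, (B ^ k) i j = ((∑ j, ‖(M ^ k) i j‖₊ : NNReal) : ℝ) := h8.symm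
      _ < ((1 : NNReal) : ℝ) := by exact_mod_cast h7
      _ = 1 := by norm_num
  -- construct the vector
  rcases isEmpty_or_nonempty m with hm | hm
  · exact ⟨fun _ => 1, fun i => (IsEmpty.false i).elim, fun i => (IsEmpty.false i).elim⟩
  set w1 : m → ℝ := fun _ => (1 : ℝ) with hw1
  set s := univ.sup' univ_nonempty (fun i => ∑ j, (B ^ k) i j) with hsdef
  have hs1 : s < 1 := by
    rw [hsdef, Finset.sup'_lt_iff]
    exact fun i _ => hrow i
  have hs_ge : ∀ i, ∑ j, (B ^ k) i j ≤ s := fun i =>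
    Finset.le_sup' (fun i => ∑ j, (B ^ k) i j) (mem_univ i)
  set q := max s (1/2 : ℝ) with hqdef
  have hq0 : 0 < q := lt_of_lt_of_le one_half_pos le_sup_right
  have hq1 : q < 1 := max_lt hs1 one_half_lt_one
  set t := q ^ ((k : ℝ)⁻¹) with htdef
  have ht0 : 0 < t := Real.rpow_pos_of_pos hq0 _
  have hkne : k ≠ 0 := by omega
  have ht1 : t < 1 := Real.rpow_lt_one hq0.le hq1 (by positivity)
  have htk : t ^ k = q := Real.rpow_inv_natCast_pow hq0.le hkne
  set v : m → ℝ := fun i => ∑ j ∈ Finset.range k, t ^ (k - 1 - j) * ((B ^ j *ᵥ w1) i) with hvdef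
  have hmv_nonneg : ∀ (j : ℕ) (i : m), 0 ≤ (B ^ j *ᵥ w1) i := by
    intro j i
    rw [Matrix.mulVec, dotProduct]
    exact Finset.sum_nonneg fun l _ => by
      simpa [hw1] using pow_entries_nonneg B hB j i l
  have hvpos : ∀ i, 0 < v i := by
    intro i
    refine Finset.sum_pos' (fun j _ => mul_nonneg (le_of_lt (pow_pos ht0 _)) (hmv_nonneg j i)) ?_
    refine ⟨0, Finset.mem_range.mpr (by omega), ?_⟩
    have : (B ^ 0 *ᵥ w1) i = 1 := by simp [Matrix.one_mulVec, hw1]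
    rw [this, mul_one]
    exact pow_pos ht0 _
  have hBv : ∀ i, (B *ᵥ v) i = ∑ j ∈ Finset.range k, t ^ (k - 1 - j) * ((B ^ (j + 1) *ᵥ w1) i) := by
    intro i
    calc (B *ᵥ v) i = ∑ l, B i l * v l := by rw [Matrix.mulVec, dotProduct]
      _ = ∑ l, ∑ j ∈ Finset.range k, B i l * (t ^ (k - 1 - j) * ((B ^ j *ᵥ w1) l)) := by
          refine Finset.sum_congr rfl fun l _ => ?_
          rw [hvdef, Finset.mul_sum]
      _ = ∑ j ∈ Finset.range k, ∑ l, B i l * (t ^ (k - 1 - j) * ((B ^ j *ᵥ w1) l)) :=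
          Finset.sum_comm
      _ = ∑ j ∈ Finset.range k, t ^ (k - 1 - j) * ((B ^ (j + 1) *ᵥ w1) i) := by
          refine Finset.sum_congr rfl fun j _ => ?_
          have h9 : (B ^ (j + 1) *ᵥ w1) i = ∑ l, B i l * ((B ^ j *ᵥ w1) l) := by
            rw [pow_succ', ← Matrix.mulVec_mulVec, Matrix.mulVec, dotProduct]
          rw [h9, Finset.mul_sum]
          exact Finset.sum_congr rfl fun l _ => by ring
  have hkey : ∀ i, (B *ᵥ v) i + t ^ k = t * v i + (B ^ k *ᵥ w1) i := by
    intro i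
    have e1 : ∑ j ∈ Finset.range (k + 1), t ^ (k - j) * ((B ^ j *ᵥ w1) i)
        = t * v i + (B ^ k *ᵥ w1) i := by
      rw [Finset.sum_range_succ]
      congr 1
      · rw [hvdef, Finset.mul_sum]
        refine Finset.sum_congr rfl fun j hj => ?_
        have hjk : j < k := Finset.mem_range.mp hj
        have : k - j = (k - 1 - j) + 1 := by omega
        rw [this, pow_succ']
        ring
      · simp
    have e2 : ∑ j ∈ Finset.range (k + 1), t ^ (k - j) * ((B ^ j *ᵥ w1) i)
        = (B *ᵥ v) i + t ^ k := by
      rw [Finset.sum_range_succ']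
      congr 1
      · rw [hBv i]
        refine Finset.sum_congr rfl fun j _ => ?_
        have : k - (j + 1) = k - 1 - j := by omega
        rw [this]
      · have : (B ^ 0 *ᵥ w1) i = 1 := by simp [Matrix.one_mulVec, hw1]
        rw [this, Nat.sub_zero, mul_one]
    have := e1.symm.trans e2
    linarith
  refine ⟨v, hvpos, fun i => ?_⟩
  have hBk : (B ^ k *ᵥ w1) i ≤ t ^ k := by
    rw [htk]
    refine le_trans ?_ le_sup_left
    have : (B ^ k *ᵥ w1) i = ∑ j, (B ^ k) i j := by
      rw [Matrix.mulVec, dotProduct]; simp [hw1]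
    rw [this]
    exact hs_ge i
  have h10 : (B *ᵥ v) i ≤ t * v i := by linarith [hkey i]
  calc (B *ᵥ v) i ≤ t * v i := h10
    _ < 1 * v i := by
        exact mul_lt_mul_of_pos_right ht1 (hvpos i)
    _ = v i := one_mul _


/-- For a 2×2-block matrix `A = [[0, A₁₂], [A₂₁, A₂₂]]`, if `ρ(|A|) < 1` then
`ρ(|A₂₂| + |A₂₁ A₁₂|) < 1`. -/
theorem specRad_abs_two_block_reduction
    (n1 n2 : ℕ)
    (A12 : Matrix (Fin n1) (Fin n2) ℝ) (A21 : Matrix (Fin n2) (Fin n1) ℝ)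
    (A22 : Matrix (Fin n2) (Fin n2) ℝ)
    (hρ : specRad (Matrix.of fun x y =>
        |Matrix.fromBlocks (0 : Matrix (Fin n1) (Fin n1) ℝ) A12 A21 A22 x y|) < 1) :
    specRad (Matrix.of fun a b : Fin n2 => |A22 a b| + |(A21 * A12) a b|) < 1 := by
  classical
  set Babs : Matrix (Fin n1 ⊕ Fin n2) (Fin n1 ⊕ Fin n2) ℝ :=
    Matrix.of fun x y =>
      |Matrix.fromBlocks (0 : Matrix (Fin n1) (Fin n1) ℝ) A12 A21 A22 x y| with hBabs
  have hBnn : ∀ x y, 0 ≤ Babs x y := fun x y => abs_nonneg _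
  obtain ⟨v, hv, hvlt⟩ := exists_pos_vec Babs hBnn hρ
  set u : Fin n1 → ℝ := fun l => v (Sum.inl l) with hu
  set w : Fin n2 → ℝ := fun b => v (Sum.inr b) with hw
  have hF1 : ∀ l, ∑ b, |A12 l b| * w b ≤ u l := by
    intro l
    have h1 := hvlt (Sum.inl l)
    rw [Matrix.mulVec, dotProduct, Fintype.sum_sum_type] at h1
    simp only [hBabs, Matrix.of_apply, Matrix.fromBlocks_apply₁₁, Matrix.fromBlocks_apply₁₂,
      Matrix.zero_apply, abs_zero, zero_mul, Finset.sum_const_zero, zero_add] at h1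
    exact le_of_lt h1
  have hF2 : ∀ i, (∑ l, |A21 i l| * u l) + ∑ b, |A22 i b| * w b < w i := by
    intro i
    have h2 := hvlt (Sum.inr i)
    rw [Matrix.mulVec, dotProduct, Fintype.sum_sum_type] at h2
    simpa only [hBabs, Matrix.of_apply, Matrix.fromBlocks_apply₂₁,
      Matrix.fromBlocks_apply₂₂] using h2
  refine specRad_lt_one_of_vec _ (fun a b => add_nonneg (abs_nonneg _) (abs_nonneg _))
    w (fun b => hv _) ?_
  intro i
  have hCw : (Matrix.of (fun a b : Fin n2 => |A22 a b| + |(A21 * A12) a b|) *ᵥ w) i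
      = (∑ b, |A22 i b| * w b) + ∑ b, |(A21 * A12) i b| * w b := by
    rw [Matrix.mulVec, dotProduct, ← Finset.sum_add_distrib]
    exact Finset.sum_congr rfl fun b _ => by rw [Matrix.of_apply]; ring
  rw [hCw]
  have hbound : ∑ b, |(A21 * A12) i b| * w b ≤ ∑ l, |A21 i l| * u l := by
    have step0 : ∀ b, |(A21 * A12) i b| ≤ ∑ l, |A21 i l| * |A12 l b| := by
      intro b
      rw [Matrix.mul_apply]
      refine le_trans (Finset.abs_sum_le_sum_abs _ _) ?_
      exact le_of_eq (Finset.sum_congr rfl fun l _ => abs_mul _ _)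
    calc ∑ b, |(A21 * A12) i b| * w b
        ≤ ∑ b, (∑ l, |A21 i l| * |A12 l b|) * w b :=
          Finset.sum_le_sum fun b _ => mul_le_mul_of_nonneg_right (step0 b) (hv _).le
      _ = ∑ b, ∑ l, |A21 i l| * |A12 l b| * w b :=
          Finset.sum_congr rfl fun b _ => Finset.sum_mul _ _ _
      _ = ∑ l, ∑ b, |A21 i l| * |A12 l b| * w b := Finset.sum_comm
      _ = ∑ l, |A21 i l| * ∑ b, |A12 l b| * w b := by
          refine Finset.sum_congr rfl fun l _ => ?_
          rw [Finset.mul_sum]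
          exact Finset.sum_congr rfl fun b _ => by ring
      _ ≤ ∑ l, |A21 i l| * u l :=
          Finset.sum_le_sum fun l _ => mul_le_mul_of_nonneg_left (hF1 l) (abs_nonneg _)
  calc (∑ b, |A22 i b| * w b) + ∑ b, |(A21 * A12) i b| * w b
      ≤ (∑ b, |A22 i b| * w b) + ∑ l, |A21 i l| * u l := by linarith [hbound]
    _ = (∑ l, |A21 i l| * u l) + ∑ b, |A22 i b| * w b := by ring
    _ < w i := hF2 i
end

section
/- Let A^(i)_II, A^(i)_IΓ, A^(i)_ΓI (i = 1,...,p) and A_ΓΓ, M_ΓΓ be real matrices with A^(i)_II and M_ΓΓ invertible, and let S^(i)_ΓΓ := A^(i)_ΓΓ - A^(i)_ΓI (A^(i)_II)^{-1} A^(i)_IΓ where A_ΓΓ = Σ_i A^(i)_ΓΓ. Suppose Σ_{i=1}^p |I^(i)_ΓΓ - M_ΓΓ^{-1} A^(i)_ΓΓ| = |I_ΓΓ - M_ΓΓ^{-1} A_ΓΓ| where Σ_i I^(i)_ΓΓ = I_ΓΓ. If ρ(|I - M^{-1}A|) < 1 for the block-arrow matrix A and block-diagonal M built from these blocks, then ρ(Σ_{i=1}^p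 |I^(i)_ΓΓ - M_ΓΓ^{-1} S^(i)_ΓΓ|) < 1. -/
open Matrix Finset

open Polynomial Filter
open scoped ENNReal NNReal Topology

lemma eval_charpoly' {K : Type*} [CommRing K] {n : Type*} [Fintype n] [DecidableEq n]
    (M : Matrix n n K) (μ : K) : (M.charpoly).eval μ = (μ • (1 : Matrix n n K) - M).det := by
  rw [Matrix.charpoly, ← Polynomial.coe_evalRingHom, RingHom.map_det]
  congr 1
  ext i j
  by_cases h : i = j <;>
    simp [h, charmatrix_apply, Matrix.one_apply, Matrix.diagonal_apply, Matrix.smul_apply,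
      Matrix.sub_apply, Matrix.map_apply]

section Lemma2

attribute [local instance] Matrix.linftyOpNormedRing Matrix.linftyOpNormedAlgebra

lemma pow_entry_nonneg {n : Type*} [Fintype n] [DecidableEq n]
    {C : Matrix n n ℝ} (hC : ∀ i j, 0 ≤ C i j) (N : ℕ) : ∀ i j, 0 ≤ (C ^ N) i j := by
  induction N with
  | zero => intro i j; rw [pow_zero]; by_cases h : i = j <;> simp [Matrix.one_apply, h]
  | succ k ih =>
    intro i j
    rw [pow_succ, Matrix.mul_apply]
    exact Finset.sum_nonneg fun l _ => mul_nonneg (ih i l) (hC l j)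

lemma exists_pos_vec_s7 {n : Type*} [Fintype n] [DecidableEq n]
    {C : Matrix n n ℝ} (hC : ∀ i j, 0 ≤ C i j) (h : specRad C < 1) :
    ∃ (w : n → ℝ) (δ : ℝ), 0 < δ ∧ (∀ i, 1 ≤ w i) ∧ ∀ i, (C *ᵥ w) i + δ ≤ w i := by
  rcases isEmpty_or_nonempty n with hn | hn
  · exact ⟨fun _ => 1, 1, one_pos, fun i => (hn.elim i), fun i => (hn.elim i)⟩
  haveI : CompleteSpace (Matrix n n ℂ) := FiniteDimensional.complete ℂ _
  set Cc : Matrix n n ℂ := C.map Complex.ofReal with hCc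
  -- the root-modulus set is finite, hence bounded above
  have hS : BddAbove {r : ℝ | ∃ μ : ℂ, (Cc.charpoly).IsRoot μ ∧ r = ‖μ‖} := by
    have hfin : {r : ℝ | ∃ μ : ℂ, (Cc.charpoly).IsRoot μ ∧ r = ‖μ‖}.Finite := by
      have : {r : ℝ | ∃ μ : ℂ, (Cc.charpoly).IsRoot μ ∧ r = ‖μ‖} ⊆
          (fun z : ℂ => ‖z‖) '' {μ : ℂ | μ ∈ Cc.charpoly.roots} := by
        rintro r ⟨μ, hμ, rfl⟩
        exact ⟨μ, (Polynomial.mem_roots (Matrix.charpoly_monic Cc).ne_zero).2 hμ, rfl⟩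
      refine Set.Finite.subset (Set.Finite.image _ ?_) this
      exact (Cc.charpoly.roots.toFinset : Finset ℂ).finite_toSet.subset
        (fun μ hμ => Multiset.mem_toFinset.2 hμ)
    exact hfin.bddAbove
  -- spectral radius (Banach-algebra sense) is < 1
  have hsr : spectralRadius ℂ Cc < 1 := by
    have hspec : ∀ μ ∈ spectrum ℂ Cc, ‖μ‖ ≤ specRad C := by
      intro μ hμ
      rw [spectrum.mem_iff] at hμ
      have hdet : (μ • (1 : Matrix n n ℂ) - Cc).det = 0 := by
        by_contra hd
        exact hμ (by
          have : IsUnit (μ • (1 : Matrix n n ℂ) - Cc).det := isUnit_iff_ne_zero.2 hd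
          have := (Matrix.isUnit_iff_isUnit_det _).2 this
          simpa [Algebra.algebraMap_eq_smul_one] using this)
      refine le_csSup hS ⟨μ, ?_, rfl⟩
      rw [Polynomial.IsRoot, eval_charpoly']
      exact hdet
    have hcoe : ((Real.toNNReal (specRad C) : ℝ≥0) : ℝ≥0∞) < 1 := by
      rw [ENNReal.coe_lt_one_iff, ← Real.toNNReal_one]
      exact (Real.toNNReal_lt_toNNReal_iff one_pos).2 h
    rw [spectralRadius]
    refine lt_of_le_of_lt (iSup₂_le fun μ hμ => ?_) hcoe
    rw [ENNReal.coe_le_coe]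
    have h1 : ‖μ‖₊ = Real.toNNReal (‖μ‖) := by
      ext
      simp [Real.coe_toNNReal _ (norm_nonneg μ)]
    rw [h1]
    exact Real.toNNReal_mono (hspec μ hμ)
  -- Gelfand: get N ≥ 1 with small norm of the N-th power
  have hgel := spectrum.pow_nnnorm_pow_one_div_tendsto_nhds_spectralRadius Cc
  have hev : ∀ᶠ N : ℕ in atTop, ((‖Cc ^ N‖₊ : ℝ≥0∞) ^ (1 / (N : ℝ))) < 1 :=
    hgel.eventually_lt_const hsr
  obtain ⟨N, hN1, hNlt⟩ : ∃ N : ℕ, 1 ≤ N ∧ ((‖Cc ^ N‖₊ : ℝ≥0∞) ^ (1 / (N : ℝ))) < 1 := by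
    obtain ⟨m, hm⟩ := ((eventually_ge_atTop 1).and hev).exists
    exact ⟨m, hm.1, hm.2⟩
  have hnorm : ‖Cc ^ N‖₊ < 1 := by
    by_contra hge
    push_neg at hge
    have hone : (1 : ℝ≥0∞) ≤ (‖Cc ^ N‖₊ : ℝ≥0∞) ^ (1 / (N : ℝ)) := by
      calc (1 : ℝ≥0∞) = 1 ^ (1 / (N : ℝ)) := (ENNReal.one_rpow _).symm
        _ ≤ _ := ENNReal.rpow_le_rpow (by exact_mod_cast hge) (by positivity)
    exact absurd hNlt (not_lt.2 hone)
  -- row sums of C ^ N are < 1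
  have hmap : Cc ^ N = (C ^ N).map Complex.ofReal := by
    rw [hCc]
    have h1 : C.map (Complex.ofReal : ℝ → ℂ) = Complex.ofRealHom.mapMatrix C := rfl
    rw [h1, ← map_pow]
    rfl
  have hrow : ∀ i, ∑ j, (C ^ N) i j < 1 := by
    intro i
    have hle : (∑ j, ‖(Cc ^ N) i j‖₊) ≤ ‖Cc ^ N‖₊ := by
      rw [Matrix.linfty_opNNNorm_def]
      exact Finset.le_sup (f := fun i => ∑ j, ‖(Cc ^ N) i j‖₊) (mem_univ i)
    have hlt : (∑ j, ‖(Cc ^ N) i j‖₊) < 1 := lt_of_le_of_lt hle hnorm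
    have heq : ((∑ j, ‖(Cc ^ N) i j‖₊ : ℝ≥0) : ℝ) = ∑ j, (C ^ N) i j := by
      push_cast
      refine Finset.sum_congr rfl fun j _ => ?_
      rw [hmap]
      simp [Matrix.map_apply, Complex.norm_real, Real.norm_eq_abs,
        abs_of_nonneg (pow_entry_nonneg hC N i j)]
    calc ∑ j, (C ^ N) i j = ((∑ j, ‖(Cc ^ N) i j‖₊ : ℝ≥0) : ℝ) := heq.symm
      _ < 1 := by exact_mod_cast hlt
  -- build the positive vector
  set f : ℕ → n → ℝ := fun k => (C ^ k) *ᵥ (fun _ => 1) with hf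
  have hf_nonneg : ∀ k i, 0 ≤ f k i := fun k i =>
    Finset.sum_nonneg fun j _ => by
      simpa using mul_nonneg (pow_entry_nonneg hC k i j) zero_le_one
  have hf0 : ∀ i, f 0 i = 1 := by
    intro i; simp [hf, Matrix.mulVec, dotProduct, Matrix.one_apply]
  have hfN : ∀ i, f N i = ∑ j, (C ^ N) i j := by
    intro i; simp [hf, Matrix.mulVec, dotProduct]
  set w : n → ℝ := fun i => ∑ k ∈ Finset.range N, f k i with hw
  have hw1 : ∀ i, 1 ≤ w i := by
    intro i
    have h0mem : 0 ∈ Finset.range N := Finset.mem_range.2 hN1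
    calc (1 : ℝ) = f 0 i := (hf0 i).symm
      _ ≤ ∑ k ∈ Finset.range N, f k i :=
        Finset.single_le_sum (fun k _ => hf_nonneg k i) h0mem
  have hCw : ∀ i, (C *ᵥ w) i = w i - 1 + f N i := by
    intro i
    have hstep : (C *ᵥ w) i = ∑ k ∈ Finset.range N, f (k + 1) i := by
      have hsucc : ∀ k, ∀ x : n, f (k + 1) x = ∑ y, C x y * f k y := by
        intro k x
        have hpow : (C : Matrix n n ℝ) ^ (k + 1) = C * C ^ k := pow_succ' C k
        calc f (k + 1) x = ((C * C ^ k) *ᵥ (fun _ => 1)) x := by rw [hf]; simp [hpow]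
          _ = (C *ᵥ (C ^ k *ᵥ (fun _ => 1))) x := by rw [← Matrix.mulVec_mulVec]
          _ = ∑ y, C x y * f k y := by
              rw [hf]; simp [Matrix.mulVec, dotProduct]
      rw [Matrix.mulVec, dotProduct]
      simp only [hw]
      simp_rw [Finset.mul_sum]
      rw [Finset.sum_comm]
      exact Finset.sum_congr rfl fun k _ => (hsucc k i).symm
    have h1 := Finset.sum_range_succ' (fun k => f k i) N
    have h2 := Finset.sum_range_succ (fun k => f k i) N
    rw [hstep]
    simp only [hf0] at h1
    linarith
  set δ : ℝ := 1 - univ.sup' univ_nonempty (fun i => f N i) with hδ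
  have hδpos : 0 < δ := by
    rw [hδ, sub_pos, Finset.sup'_lt_iff]
    intro i _
    rw [hfN i]
    exact hrow i
  refine ⟨w, δ, hδpos, hw1, fun i => ?_⟩
  have hfsup : f N i ≤ 1 - δ := by
    rw [hδ]
    have := Finset.le_sup' (fun i => f N i) (mem_univ i)
    linarith
  rw [hCw i]
  linarith

end Lemma2


lemma specRad_lt_one_of_mulVec_lt_s7 {n : Type*} [Fintype n] [DecidableEq n]
    {T : Matrix n n ℝ} (hT : ∀ i j, 0 ≤ T i j) {v : n → ℝ} (hv : ∀ i, 0 < v i)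
    (h : ∀ i, (T *ᵥ v) i < v i) : specRad T < 1 := by
  have hdet : ∀ μ : ℂ, ((T.map Complex.ofReal).charpoly).IsRoot μ →
      ∃ x : n → ℂ, x ≠ 0 ∧ (T.map Complex.ofReal) *ᵥ x = μ • x := by
    intro μ hμ
    have h0 : (μ • (1 : Matrix n n ℂ) - T.map Complex.ofReal).det = 0 := by
      rw [← eval_charpoly']; exact hμ
    obtain ⟨x, hx0, hx⟩ := (Matrix.exists_mulVec_eq_zero_iff).2 h0
    refine ⟨x, hx0, ?_⟩
    rw [Matrix.sub_mulVec, sub_eq_zero] at hx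
    rw [← hx, Matrix.smul_mulVec, Matrix.one_mulVec]
  rcases isEmpty_or_nonempty n with hn | hn
  · have hset : {r : ℝ | ∃ μ : ℂ, ((T.map Complex.ofReal).charpoly).IsRoot μ ∧
        r = ‖μ‖} = ∅ := by
      ext r
      simp only [Set.mem_setOf_eq, Set.mem_empty_iff_false, iff_false, not_exists]
      rintro μ ⟨hμ, rfl⟩
      obtain ⟨x, hx0, _⟩ := hdet μ hμ
      exact hx0 (funext fun i => (hn.elim i))
    rw [specRad, hset, Real.sSup_empty]; norm_num
  set r₀ : ℝ := univ.sup' univ_nonempty (fun t => (T *ᵥ v) t / v t) with hr₀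
  have hr₀0 : 0 ≤ r₀ := by
    obtain ⟨i⟩ := hn
    refine le_trans ?_ (Finset.le_sup' _ (mem_univ i))
    have : 0 ≤ (T *ᵥ v) i := Finset.sum_nonneg fun j _ => mul_nonneg (hT i j) (hv j).le
    exact div_nonneg this (hv i).le
  have hr₀1 : r₀ < 1 := by
    rw [hr₀, Finset.sup'_lt_iff]
    intro i _
    rw [div_lt_one (hv i)]
    exact h i
  have key : ∀ r ∈ {r : ℝ | ∃ μ : ℂ, ((T.map Complex.ofReal).charpoly).IsRoot μ ∧
      r = ‖μ‖}, r ≤ r₀ := by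
    rintro r ⟨μ, hμ, rfl⟩
    obtain ⟨x, hx0, hx⟩ := hdet μ hμ
    obtain ⟨k, -, hk⟩ := Finset.exists_max_image univ (fun j => ‖x j‖ / v j)
      univ_nonempty
    obtain ⟨j₀, hj₀⟩ := Function.ne_iff.1 hx0
    have hj₀' : 0 < ‖x j₀‖ / v j₀ := div_pos (by simpa using hj₀) (hv j₀)
    have hratk : 0 < ‖x k‖ / v k := lt_of_lt_of_le hj₀' (hk j₀ (mem_univ j₀))
    have hxk : 0 < ‖x k‖ := by
      rcases div_pos_iff.1 hratk with ⟨h1, _⟩ | ⟨_, h2⟩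
      · exact h1
      · linarith [hv k]
    have hcomp : ∀ j, ‖x j‖ * v k ≤ ‖x k‖ * v j := by
      intro j
      have := hk j (mem_univ j)
      rw [div_le_div_iff₀ (hv j) (hv k)] at this
      exact this
    have hmulk : (T.map Complex.ofReal *ᵥ x) k = μ * x k := by
      rw [hx]; simp
    have habs : ‖μ‖ * ‖x k‖ * v k ≤ ‖x k‖ * (T *ᵥ v) k := by
      calc ‖μ‖ * ‖x k‖ * v k
          = ‖(T.map Complex.ofReal *ᵥ x) k‖ * v k := by rw [hmulk, norm_mul]
        _ = ‖∑ j, (T k j : ℂ) * x j‖ * v k := by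
            rw [Matrix.mulVec, dotProduct]
            simp [Matrix.map_apply]
        _ ≤ (∑ j, ‖(T k j : ℂ) * x j‖) * v k := by
            exact mul_le_mul_of_nonneg_right (norm_sum_le _ _) (hv k).le
        _ = ∑ j, T k j * (‖x j‖ * v k) := by
            rw [Finset.sum_mul]
            refine Finset.sum_congr rfl fun j _ => ?_
            rw [norm_mul, Complex.norm_real, Real.norm_eq_abs, abs_of_nonneg (hT k j)]
            ring
        _ ≤ ∑ j, T k j * (‖x k‖ * v j) :=
            Finset.sum_le_sum fun j _ => mul_le_mul_of_nonneg_left (hcomp j) (hT k j)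
        _ = ‖x k‖ * (T *ᵥ v) k := by
            rw [Matrix.mulVec, dotProduct, Finset.mul_sum]
            exact Finset.sum_congr rfl fun j _ => by ring
    have hfin : ‖μ‖ ≤ (T *ᵥ v) k / v k := by
      rw [le_div_iff₀ (hv k)]
      nlinarith [habs, hxk]
    exact hfin.trans (Finset.le_sup' (fun t => (T *ᵥ v) t / v t) (mem_univ k))
  calc specRad T ≤ r₀ := Real.sSup_le key hr₀0
    _ < 1 := hr₀1


set_option maxHeartbeats 1600000 in
/-- Under the assumption `∑ᵢ |I⁽ⁱ⁾_ΓΓ - M_ΓΓ⁻¹ A⁽ⁱ⁾_ΓΓ| = |I_ΓΓ - M_ΓΓ⁻¹ A_ΓΓ|`, if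
`ρ(|I - M⁻¹ A|) < 1` for the block-arrow matrix `A` and block-diagonal `M`, then
`ρ(∑ᵢ |I⁽ⁱ⁾_ΓΓ - M_ΓΓ⁻¹ S⁽ⁱ⁾_ΓΓ|) < 1`, where
`S⁽ⁱ⁾_ΓΓ = A⁽ⁱ⁾_ΓΓ - A⁽ⁱ⁾_ΓI (A⁽ⁱ⁾_II)⁻¹ A⁽ⁱ⁾_IΓ` are the local Schur complements. -/
theorem async_schur_convergence_practical
    (p q : ℕ) (s : Fin p → ℕ)
    (AII : ∀ i : Fin p, Matrix (Fin (s i)) (Fin (s i)) ℝ)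
    (AIG : ∀ i : Fin p, Matrix (Fin (s i)) (Fin q) ℝ)
    (AGI : ∀ i : Fin p, Matrix (Fin q) (Fin (s i)) ℝ)
    (AGGi : Fin p → Matrix (Fin q) (Fin q) ℝ)
    (IGGi : Fin p → Matrix (Fin q) (Fin q) ℝ)
    (MGG : Matrix (Fin q) (Fin q) ℝ)
    (hAII : ∀ i, IsUnit (AII i).det) (hMGG : IsUnit MGG.det)
    (hIsum : ∑ i, IGGi i = (1 : Matrix (Fin q) (Fin q) ℝ))
    (hass : ∀ l t : Fin q,
      ∑ i, |(IGGi i - MGG⁻¹ * AGGi i) l t| =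
        |((1 : Matrix (Fin q) (Fin q) ℝ) - MGG⁻¹ * ∑ i, AGGi i) l t|)
    (A M : Matrix ((Σ i : Fin p, Fin (s i)) ⊕ Fin q) ((Σ i : Fin p, Fin (s i)) ⊕ Fin q) ℝ)
    (hA : ∀ x y, A x y =
      match x, y with
      | Sum.inl ⟨i, a⟩, Sum.inl ⟨j, b⟩ =>
          if h : i = j then AII i a (h ▸ b) else 0
      | Sum.inl ⟨i, a⟩, Sum.inr b => AIG i a b
      | Sum.inr a, Sum.inl ⟨j, b⟩ => AGI j a b
      | Sum.inr a, Sum.inr b => (∑ i, AGGi i) a b)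
    (hM : ∀ x y, M x y =
      match x, y with
      | Sum.inl ⟨i, a⟩, Sum.inl ⟨j, b⟩ =>
          if h : i = j then AII i a (h ▸ b) else 0
      | Sum.inl _, Sum.inr _ => 0
      | Sum.inr _, Sum.inl _ => 0
      | Sum.inr a, Sum.inr b => MGG a b)
    (hρ : specRad (Matrix.of fun x y =>
        |((1 : Matrix ((Σ i : Fin p, Fin (s i)) ⊕ Fin q)
            ((Σ i : Fin p, Fin (s i)) ⊕ Fin q) ℝ) - M⁻¹ * A) x y|) < 1) :
    specRad (Matrix.of fun l t : Fin q =>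
        ∑ i, |(IGGi i - MGG⁻¹ * (AGGi i - AGI i * (AII i)⁻¹ * AIG i)) l t|) < 1 := by
  classical
  -- the explicit inverse of the block-diagonal matrix M
  set Minv : Matrix ((Σ i : Fin p, Fin (s i)) ⊕ Fin q) ((Σ i : Fin p, Fin (s i)) ⊕ Fin q) ℝ :=
    (fun x y =>
      match x, y with
      | Sum.inl ⟨i, a⟩, Sum.inl ⟨j, b⟩ =>
          if h : i = j then (AII i)⁻¹ a (h ▸ b) else 0
      | Sum.inl _, Sum.inr _ => 0
      | Sum.inr _, Sum.inl _ => 0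
      | Sum.inr a, Sum.inr b => MGG⁻¹ a b) with hMinvdef
  have hMinv : M⁻¹ = Minv := by
    apply Matrix.inv_eq_right_inv
    ext x y
    rw [Matrix.mul_apply, Fintype.sum_sum_type]
    obtain (⟨i, a⟩ | l) := x <;> obtain (⟨j, b⟩ | t) := y
    · have hsum2 : ∑ t : Fin q, M (Sum.inl ⟨i, a⟩) (Sum.inr t) * Minv (Sum.inr t) (Sum.inl ⟨j, b⟩)
          = 0 := Finset.sum_eq_zero fun t _ => by rw [hM]; exact zero_mul _
      rw [hsum2, add_zero, ← Finset.univ_sigma_univ, Finset.sum_sigma]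
      by_cases hij : i = j
      · subst hij
        rw [Finset.sum_eq_single_of_mem i (mem_univ i)]
        · have hMe : ∀ c, M (Sum.inl ⟨i, a⟩) (Sum.inl ⟨i, c⟩) = AII i a c := fun c => by
            rw [hM]; exact dif_pos rfl
          have hMie : ∀ c, Minv (Sum.inl ⟨i, c⟩) (Sum.inl ⟨i, b⟩) = (AII i)⁻¹ c b := fun c =>
            dif_pos rfl
          simp only [hMe, hMie]
          rw [show ∑ c, AII i a c * (AII i)⁻¹ c b = (AII i * (AII i)⁻¹) a b from
            (Matrix.mul_apply).symm, Matrix.mul_nonsing_inv _ (hAII i)]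
          by_cases hab : a = b
          · subst hab; rw [Matrix.one_apply_eq, Matrix.one_apply_eq]
          · rw [Matrix.one_apply_ne hab, Matrix.one_apply_ne (by
              intro hcon
              apply hab
              exact eq_of_heq (Sigma.mk.inj_iff.mp (Sum.inl.inj hcon)).2)]
        · intro k _ hk
          apply Finset.sum_eq_zero; intro c _
          rw [hM]
          simp only [dif_neg (fun (h : i = k) => hk h.symm), zero_mul]
      · rw [Finset.sum_eq_zero, Matrix.one_apply_ne (by
          intro hcon
          exact hij (Sigma.mk.inj_iff.mp (Sum.inl.inj hcon)).1)]
        intro k _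
        apply Finset.sum_eq_zero; intro c _
        by_cases hik : i = k
        · subst hik
          have hz : Minv (Sum.inl ⟨i, c⟩) (Sum.inl ⟨j, b⟩) = 0 := by
            show (if h : i = j then (AII i)⁻¹ c (h ▸ b) else 0) = 0
            rw [dif_neg hij]
          rw [hz, mul_zero]
        · rw [hM]
          simp only [dif_neg hik, zero_mul]
    · have hsum1 : ∑ z : (Σ k, Fin (s k)),
          M (Sum.inl ⟨i, a⟩) (Sum.inl z) * Minv (Sum.inl z) (Sum.inr t)
          = 0 := Finset.sum_eq_zero fun z _ => by obtain ⟨k, c⟩ := z; exact mul_zero _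
      have hsum2 : ∑ u : Fin q, M (Sum.inl ⟨i, a⟩) (Sum.inr u) * Minv (Sum.inr u) (Sum.inr t)
          = 0 := Finset.sum_eq_zero fun u _ => by rw [hM]; exact zero_mul _
      rw [hsum1, hsum2, add_zero, Matrix.one_apply_ne (by simp)]
    · have hsum1 : ∑ z : (Σ k, Fin (s k)),
          M (Sum.inr l) (Sum.inl z) * Minv (Sum.inl z) (Sum.inl ⟨j, b⟩)
          = 0 := Finset.sum_eq_zero fun z _ => by obtain ⟨k, c⟩ := z; rw [hM]; exact zero_mul _
      have hsum2 : ∑ u : Fin q, M (Sum.inr l) (Sum.inr u) * Minv (Sum.inr u) (Sum.inl ⟨j, b⟩)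
          = 0 := Finset.sum_eq_zero fun u _ => mul_zero _
      rw [hsum1, hsum2, add_zero, Matrix.one_apply_ne (by simp)]
    · have hsum1 : ∑ z : (Σ k, Fin (s k)),
          M (Sum.inr l) (Sum.inl z) * Minv (Sum.inl z) (Sum.inr t)
          = 0 := Finset.sum_eq_zero fun z _ => by obtain ⟨k, c⟩ := z; rw [hM]; exact zero_mul _
      have hMe : ∀ u, M (Sum.inr l) (Sum.inr u) = MGG l u := fun u => by rw [hM]
      have hMie : ∀ u, Minv (Sum.inr u) (Sum.inr t) = MGG⁻¹ u t := fun u => rfl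
      rw [hsum1, zero_add]
      simp only [hMe, hMie]
      rw [show ∑ u, MGG l u * MGG⁻¹ u t = (MGG * MGG⁻¹) l t from (Matrix.mul_apply).symm,
        Matrix.mul_nonsing_inv _ hMGG]
      by_cases hlt : l = t
      · subst hlt; rw [Matrix.one_apply_eq, Matrix.one_apply_eq]
      · rw [Matrix.one_apply_ne hlt, Matrix.one_apply_ne (by simp [hlt])]
  -- entries of Minv * A
  have hBII : ∀ (i : Fin p) (a : Fin (s i)) (j : Fin p) (b : Fin (s j)),
      (Minv * A) (Sum.inl ⟨i, a⟩) (Sum.inl ⟨j, b⟩) =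
        (1 : Matrix ((Σ i : Fin p, Fin (s i)) ⊕ Fin q)
          ((Σ i : Fin p, Fin (s i)) ⊕ Fin q) ℝ) (Sum.inl ⟨i, a⟩) (Sum.inl ⟨j, b⟩) := by
    intro i a j b
    rw [Matrix.mul_apply, Fintype.sum_sum_type]
    have hsum2 : ∑ t : Fin q, Minv (Sum.inl ⟨i, a⟩) (Sum.inr t) * A (Sum.inr t) (Sum.inl ⟨j, b⟩)
        = 0 := Finset.sum_eq_zero fun t _ => zero_mul _
    rw [hsum2, add_zero, ← Finset.univ_sigma_univ, Finset.sum_sigma]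
    by_cases hij : i = j
    · subst hij
      rw [Finset.sum_eq_single_of_mem i (mem_univ i)]
      · have hMie : ∀ c, Minv (Sum.inl ⟨i, a⟩) (Sum.inl ⟨i, c⟩) = (AII i)⁻¹ a c := fun c =>
          dif_pos rfl
        have hAe : ∀ c, A (Sum.inl ⟨i, c⟩) (Sum.inl ⟨i, b⟩) = AII i c b := fun c => by
          rw [hA]; exact dif_pos rfl
        simp only [hMie, hAe]
        rw [show ∑ c, (AII i)⁻¹ a c * AII i c b = ((AII i)⁻¹ * AII i) a b from
          (Matrix.mul_apply).symm, Matrix.nonsing_inv_mul _ (hAII i)]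
        by_cases hab : a = b
        · subst hab; rw [Matrix.one_apply_eq, Matrix.one_apply_eq]
        · rw [Matrix.one_apply_ne hab, Matrix.one_apply_ne (by
            intro hcon
            apply hab
            exact eq_of_heq (Sigma.mk.inj_iff.mp (Sum.inl.inj hcon)).2)]
      · intro k _ hk
        apply Finset.sum_eq_zero; intro c _
        have hz : Minv (Sum.inl ⟨i, a⟩) (Sum.inl ⟨k, c⟩) = 0 := by
          show (if h : i = k then (AII i)⁻¹ a (h ▸ c) else 0) = 0
          rw [dif_neg (fun (h : i = k) => hk h.symm)]
        rw [hz, zero_mul]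
    · rw [Finset.sum_eq_zero, Matrix.one_apply_ne (by
        intro hcon
        exact hij (Sigma.mk.inj_iff.mp (Sum.inl.inj hcon)).1)]
      intro k _
      apply Finset.sum_eq_zero; intro c _
      by_cases hik : i = k
      · subst hik
        have hz : A (Sum.inl ⟨i, c⟩) (Sum.inl ⟨j, b⟩) = 0 := by
          rw [hA]; exact dif_neg hij
        rw [hz, mul_zero]
      · have hz : Minv (Sum.inl ⟨i, a⟩) (Sum.inl ⟨k, c⟩) = 0 := by
          show (if h : i = k then (AII i)⁻¹ a (h ▸ c) else 0) = 0
          rw [dif_neg hik]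
        rw [hz, zero_mul]
  have hBIG : ∀ (i : Fin p) (a : Fin (s i)) (t : Fin q),
      (Minv * A) (Sum.inl ⟨i, a⟩) (Sum.inr t) = ((AII i)⁻¹ * AIG i) a t := by
    intro i a t
    rw [Matrix.mul_apply, Fintype.sum_sum_type]
    have hsum2 : ∑ u : Fin q, Minv (Sum.inl ⟨i, a⟩) (Sum.inr u) * A (Sum.inr u) (Sum.inr t)
        = 0 := Finset.sum_eq_zero fun u _ => zero_mul _
    rw [hsum2, add_zero, ← Finset.univ_sigma_univ, Finset.sum_sigma]
    rw [Finset.sum_eq_single_of_mem i (mem_univ i)]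
    · have hMie : ∀ c, Minv (Sum.inl ⟨i, a⟩) (Sum.inl ⟨i, c⟩) = (AII i)⁻¹ a c := fun c =>
        dif_pos rfl
      have hAe : ∀ c, A (Sum.inl ⟨i, c⟩) (Sum.inr t) = AIG i c t := fun c => by rw [hA]
      simp only [hMie, hAe]
      exact (Matrix.mul_apply).symm
    · intro k _ hk
      apply Finset.sum_eq_zero; intro c _
      have hz : Minv (Sum.inl ⟨i, a⟩) (Sum.inl ⟨k, c⟩) = 0 := by
        show (if h : i = k then (AII i)⁻¹ a (h ▸ c) else 0) = 0
        rw [dif_neg (fun (h : i = k) => hk h.symm)]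
      rw [hz, zero_mul]
  have hBGI : ∀ (l : Fin q) (j : Fin p) (b : Fin (s j)),
      (Minv * A) (Sum.inr l) (Sum.inl ⟨j, b⟩) = (MGG⁻¹ * AGI j) l b := by
    intro l j b
    rw [Matrix.mul_apply, Fintype.sum_sum_type]
    have hsum1 : ∑ z : (Σ k, Fin (s k)),
        Minv (Sum.inr l) (Sum.inl z) * A (Sum.inl z) (Sum.inl ⟨j, b⟩)
        = 0 := Finset.sum_eq_zero fun z _ => by obtain ⟨k, c⟩ := z; exact zero_mul _
    have hAe : ∀ u, A (Sum.inr u) (Sum.inl ⟨j, b⟩) = AGI j u b := fun u => by rw [hA]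
    have hMie : ∀ u, Minv (Sum.inr l) (Sum.inr u) = MGG⁻¹ l u := fun u => rfl
    rw [hsum1, zero_add]
    simp only [hMie, hAe]
    exact (Matrix.mul_apply).symm
  have hBGG : ∀ (l t : Fin q),
      (Minv * A) (Sum.inr l) (Sum.inr t) = (MGG⁻¹ * ∑ i, AGGi i) l t := by
    intro l t
    rw [Matrix.mul_apply, Fintype.sum_sum_type]
    have hsum1 : ∑ z : (Σ k, Fin (s k)),
        Minv (Sum.inr l) (Sum.inl z) * A (Sum.inl z) (Sum.inr t)
        = 0 := Finset.sum_eq_zero fun z _ => by obtain ⟨k, c⟩ := z; exact zero_mul _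
    have hAe : ∀ u, A (Sum.inr u) (Sum.inr t) = (∑ i, AGGi i) u t := fun u => by rw [hA]
    have hMie : ∀ u, Minv (Sum.inr l) (Sum.inr u) = MGG⁻¹ l u := fun u => rfl
    rw [hsum1, zero_add]
    simp only [hMie, hAe]
    exact (Matrix.mul_apply).symm
  -- entries of the iteration matrix
  set Cmat : Matrix ((Σ i : Fin p, Fin (s i)) ⊕ Fin q) ((Σ i : Fin p, Fin (s i)) ⊕ Fin q) ℝ :=
    Matrix.of fun x y =>
      |((1 : Matrix ((Σ i : Fin p, Fin (s i)) ⊕ Fin q)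
          ((Σ i : Fin p, Fin (s i)) ⊕ Fin q) ℝ) - M⁻¹ * A) x y| with hCdef
  have hone_inl : ∀ (i : Fin p) (a : Fin (s i)) (t : Fin q),
      (1 : Matrix ((Σ i : Fin p, Fin (s i)) ⊕ Fin q)
        ((Σ i : Fin p, Fin (s i)) ⊕ Fin q) ℝ) (Sum.inl ⟨i, a⟩) (Sum.inr t) = 0 :=
    fun i a t => Matrix.one_apply_ne (by simp)
  have hone_inr : ∀ (l : Fin q) (j : Fin p) (b : Fin (s j)),
      (1 : Matrix ((Σ i : Fin p, Fin (s i)) ⊕ Fin q)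
        ((Σ i : Fin p, Fin (s i)) ⊕ Fin q) ℝ) (Sum.inr l) (Sum.inl ⟨j, b⟩) = 0 :=
    fun l j b => Matrix.one_apply_ne (by simp)
  have hone_gg : ∀ (l t : Fin q),
      (1 : Matrix ((Σ i : Fin p, Fin (s i)) ⊕ Fin q)
        ((Σ i : Fin p, Fin (s i)) ⊕ Fin q) ℝ) (Sum.inr l) (Sum.inr t)
        = (1 : Matrix (Fin q) (Fin q) ℝ) l t := by
    intro l t
    by_cases hlt : l = t
    · subst hlt; rw [Matrix.one_apply_eq, Matrix.one_apply_eq]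
    · rw [Matrix.one_apply_ne hlt, Matrix.one_apply_ne (by simp [hlt])]
  have hCII : ∀ (i : Fin p) (a : Fin (s i)) (j : Fin p) (b : Fin (s j)),
      Cmat (Sum.inl ⟨i, a⟩) (Sum.inl ⟨j, b⟩) = 0 := by
    intro i a j b
    show |((1 : Matrix ((Σ i : Fin p, Fin (s i)) ⊕ Fin q)
        ((Σ i : Fin p, Fin (s i)) ⊕ Fin q) ℝ) - M⁻¹ * A) (Sum.inl ⟨i, a⟩) (Sum.inl ⟨j, b⟩)| = 0
    rw [Matrix.sub_apply, hMinv, hBII, sub_self, abs_zero]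
  have hCIG : ∀ (i : Fin p) (a : Fin (s i)) (t : Fin q),
      Cmat (Sum.inl ⟨i, a⟩) (Sum.inr t) = |((AII i)⁻¹ * AIG i) a t| := by
    intro i a t
    show |((1 : Matrix ((Σ i : Fin p, Fin (s i)) ⊕ Fin q)
        ((Σ i : Fin p, Fin (s i)) ⊕ Fin q) ℝ) - M⁻¹ * A) (Sum.inl ⟨i, a⟩) (Sum.inr t)| = _
    rw [Matrix.sub_apply, hMinv, hBIG, hone_inl, zero_sub, abs_neg]
  have hCGI : ∀ (l : Fin q) (j : Fin p) (b : Fin (s j)),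
      Cmat (Sum.inr l) (Sum.inl ⟨j, b⟩) = |(MGG⁻¹ * AGI j) l b| := by
    intro l j b
    show |((1 : Matrix ((Σ i : Fin p, Fin (s i)) ⊕ Fin q)
        ((Σ i : Fin p, Fin (s i)) ⊕ Fin q) ℝ) - M⁻¹ * A) (Sum.inr l) (Sum.inl ⟨j, b⟩)| = _
    rw [Matrix.sub_apply, hMinv, hBGI, hone_inr, zero_sub, abs_neg]
  have hCGG : ∀ (l t : Fin q),
      Cmat (Sum.inr l) (Sum.inr t)
        = |((1 : Matrix (Fin q) (Fin q) ℝ) - MGG⁻¹ * ∑ i, AGGi i) l t| := by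
    intro l t
    show |((1 : Matrix ((Σ i : Fin p, Fin (s i)) ⊕ Fin q)
        ((Σ i : Fin p, Fin (s i)) ⊕ Fin q) ℝ) - M⁻¹ * A) (Sum.inr l) (Sum.inr t)| = _
    rw [Matrix.sub_apply, hMinv, hBGG, hone_gg, Matrix.sub_apply]
  -- get the strictly dominant positive vector
  have hCnon : ∀ x y, 0 ≤ Cmat x y := fun x y => abs_nonneg _
  obtain ⟨w, δ, hδ, hw1, hineq⟩ := exists_pos_vec_s7 hCnon hρ
  set u : (Σ i : Fin p, Fin (s i)) → ℝ := fun z => w (Sum.inl z) with hu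
  set v : Fin q → ℝ := fun t => w (Sum.inr t) with hv
  have hvpos : ∀ t, 0 < v t := fun t => lt_of_lt_of_le one_pos (hw1 _)
  have hrowI : ∀ (i : Fin p) (b : Fin (s i)),
      ∑ t, |((AII i)⁻¹ * AIG i) b t| * v t + δ ≤ u ⟨i, b⟩ := by
    intro i b
    have h0 := hineq (Sum.inl ⟨i, b⟩)
    rw [Matrix.mulVec, dotProduct, Fintype.sum_sum_type] at h0
    have h1 : ∑ z : (Σ j, Fin (s j)), Cmat (Sum.inl ⟨i, b⟩) (Sum.inl z) * w (Sum.inl z) = 0 :=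
      Finset.sum_eq_zero fun z _ => by obtain ⟨j, c⟩ := z; rw [hCII i b j c, zero_mul]
    have h2 : ∑ t, Cmat (Sum.inl ⟨i, b⟩) (Sum.inr t) * w (Sum.inr t)
        = ∑ t, |((AII i)⁻¹ * AIG i) b t| * v t :=
      Finset.sum_congr rfl fun t _ => by rw [hCIG i b t]
    rw [h1, zero_add, h2] at h0
    exact h0
  have hrowG : ∀ l : Fin q,
      (∑ z : (Σ j, Fin (s j)), |(MGG⁻¹ * AGI z.1) l z.2| * u z)
        + (∑ t, |((1 : Matrix (Fin q) (Fin q) ℝ) - MGG⁻¹ * ∑ i, AGGi i) l t| * v t)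
        + δ ≤ v l := by
    intro l
    have h0 := hineq (Sum.inr l)
    rw [Matrix.mulVec, dotProduct, Fintype.sum_sum_type] at h0
    have h1 : ∑ z : (Σ j, Fin (s j)), Cmat (Sum.inr l) (Sum.inl z) * w (Sum.inl z)
        = ∑ z : (Σ j, Fin (s j)), |(MGG⁻¹ * AGI z.1) l z.2| * u z :=
      Finset.sum_congr rfl fun z _ => by obtain ⟨j, c⟩ := z; rw [hCGI l j c]
    have h2 : ∑ t, Cmat (Sum.inr l) (Sum.inr t) * w (Sum.inr t)
        = ∑ t, |((1 : Matrix (Fin q) (Fin q) ℝ) - MGG⁻¹ * ∑ i, AGGi i) l t| * v t :=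
      Finset.sum_congr rfl fun t _ => by rw [hCGG l t]
    rw [h1, h2] at h0
    exact h0
  -- conclude via the dominance criterion
  refine specRad_lt_one_of_mulVec_lt_s7
    (T := Matrix.of fun l t : Fin q =>
      ∑ i, |(IGGi i - MGG⁻¹ * (AGGi i - AGI i * (AII i)⁻¹ * AIG i)) l t|)
    (v := v)
    (fun l t => by
      rw [Matrix.of_apply]
      exact Finset.sum_nonneg fun i _ => abs_nonneg _)
    hvpos (fun l => ?_)
  have hTb : ∀ t : Fin q,
      (∑ i, |(IGGi i - MGG⁻¹ * (AGGi i - AGI i * (AII i)⁻¹ * AIG i)) l t|)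
        ≤ |((1 : Matrix (Fin q) (Fin q) ℝ) - MGG⁻¹ * ∑ i, AGGi i) l t|
          + ∑ i, ∑ b, |(MGG⁻¹ * AGI i) l b| * |((AII i)⁻¹ * AIG i) b t| := by
    intro t
    have hsplit : ∀ i : Fin p, IGGi i - MGG⁻¹ * (AGGi i - AGI i * (AII i)⁻¹ * AIG i)
        = (IGGi i - MGG⁻¹ * AGGi i) + (MGG⁻¹ * AGI i) * ((AII i)⁻¹ * AIG i) := by
      intro i
      have hassoc : MGG⁻¹ * (AGI i * (AII i)⁻¹ * AIG i)
          = (MGG⁻¹ * AGI i) * ((AII i)⁻¹ * AIG i) := by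
        simp only [Matrix.mul_assoc]
      rw [mul_sub, hassoc]
      abel
    calc ∑ i, |(IGGi i - MGG⁻¹ * (AGGi i - AGI i * (AII i)⁻¹ * AIG i)) l t|
        ≤ ∑ i, (|(IGGi i - MGG⁻¹ * AGGi i) l t|
            + ∑ b, |(MGG⁻¹ * AGI i) l b| * |((AII i)⁻¹ * AIG i) b t|) := by
          refine Finset.sum_le_sum fun i _ => ?_
          rw [hsplit i, Matrix.add_apply]
          refine (abs_add_le _ _).trans (add_le_add_right ?_ _)
          rw [Matrix.mul_apply]
          refine (Finset.abs_sum_le_sum_abs _ _).trans (le_of_eq ?_)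
          exact Finset.sum_congr rfl fun b _ => abs_mul _ _
      _ = _ := by rw [Finset.sum_add_distrib, hass l t]
  have hswap : ∑ t, (∑ i, ∑ b, |(MGG⁻¹ * AGI i) l b| * |((AII i)⁻¹ * AIG i) b t|) * v t
      = ∑ i, ∑ b, |(MGG⁻¹ * AGI i) l b| * (∑ t, |((AII i)⁻¹ * AIG i) b t| * v t) := by
    simp_rw [Finset.sum_mul]
    rw [Finset.sum_comm]
    refine Finset.sum_congr rfl fun i _ => ?_
    rw [Finset.sum_comm]
    simp_rw [mul_assoc, ← Finset.mul_sum]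
  calc ((Matrix.of fun l t : Fin q =>
        ∑ i, |(IGGi i - MGG⁻¹ * (AGGi i - AGI i * (AII i)⁻¹ * AIG i)) l t|) *ᵥ v) l
      = ∑ t, (∑ i, |(IGGi i - MGG⁻¹ * (AGGi i - AGI i * (AII i)⁻¹ * AIG i)) l t|) * v t := by
        rw [Matrix.mulVec, dotProduct]
        simp only [Matrix.of_apply]
    _ ≤ ∑ t, (|((1 : Matrix (Fin q) (Fin q) ℝ) - MGG⁻¹ * ∑ i, AGGi i) l t|
          + ∑ i, ∑ b, |(MGG⁻¹ * AGI i) l b| * |((AII i)⁻¹ * AIG i) b t|) * v t :=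
        Finset.sum_le_sum fun t _ => mul_le_mul_of_nonneg_right (hTb t) (hvpos t).le
    _ = ∑ t, |((1 : Matrix (Fin q) (Fin q) ℝ) - MGG⁻¹ * ∑ i, AGGi i) l t| * v t
          + ∑ i, ∑ b, |(MGG⁻¹ * AGI i) l b| * (∑ t, |((AII i)⁻¹ * AIG i) b t| * v t) := by
        simp_rw [add_mul]
        rw [Finset.sum_add_distrib, hswap]
    _ ≤ ∑ t, |((1 : Matrix (Fin q) (Fin q) ℝ) - MGG⁻¹ * ∑ i, AGGi i) l t| * v t
          + ∑ i, ∑ b, |(MGG⁻¹ * AGI i) l b| * u ⟨i, b⟩ := by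
        refine add_le_add_right (Finset.sum_le_sum fun i _ =>
          Finset.sum_le_sum fun b _ => ?_) _
        refine mul_le_mul_of_nonneg_left ?_ (abs_nonneg _)
        have := hrowI i b
        have h0 : 0 ≤ ∑ t, |((AII i)⁻¹ * AIG i) b t| * v t :=
          Finset.sum_nonneg fun t _ => mul_nonneg (abs_nonneg _) (hvpos t).le
        linarith
    _ = ∑ t, |((1 : Matrix (Fin q) (Fin q) ℝ) - MGG⁻¹ * ∑ i, AGGi i) l t| * v t
          + ∑ z : (Σ j, Fin (s j)), |(MGG⁻¹ * AGI z.1) l z.2| * u z := by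
        rw [← Finset.univ_sigma_univ, Finset.sum_sigma]
    _ ≤ v l - δ := by have := hrowG l; linarith
    _ < v l := by linarith
end

section
/- Let A = M - N be an H-splitting of a real square matrix A, i.e., M is nonsingular and ⟨M⟩ - |N| is an M-matrix, where ⟨M⟩ is the comparison matrix of M. Then ρ(|I - M^{-1}A|) < 1. -/
open Matrix Finset

/-- The comparison matrix `⟨M⟩`: diagonal entries `|mᵢᵢ|`, off-diagonal entries `-|mᵢⱼ|`. -/
def compMat {n : Type*} [DecidableEq n] (M : Matrix n n ℝ) : Matrix n n ℝ :=
  Matrix.of fun i j => if i = j then |M i j| else -|M i j|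

/-- An M-matrix: a nonsingular matrix with nonpositive off-diagonal entries and
entry-wise nonnegative inverse. -/
def IsMMatrix {n : Type*} [Fintype n] [DecidableEq n] (B : Matrix n n ℝ) : Prop :=
  IsUnit B.det ∧ (∀ i j, i ≠ j → B i j ≤ 0) ∧ (∀ i j, 0 ≤ B⁻¹ i j)

/-- A root of the characteristic polynomial is an eigenvalue (over a field). -/
lemma exists_eigvec_of_charpoly_root {n : Type*} [Fintype n] [DecidableEq n]
    (C : Matrix n n ℂ) {μ : ℂ} (h : C.charpoly.IsRoot μ) :
    ∃ v : n → ℂ, v ≠ 0 ∧ C.mulVec v = μ • v := by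
  have hdet : (Matrix.diagonal (fun _ : n => μ) - C).det = 0 := by
    have h1 : (Polynomial.evalRingHom μ) C.charpoly = 0 := h
    rw [Matrix.charpoly, RingHom.map_det] at h1
    have h2 : (Matrix.charmatrix C).map (Polynomial.evalRingHom μ)
        = Matrix.diagonal (fun _ : n => μ) - C := by
      ext i j
      by_cases hij : i = j
      · subst hij; simp [Matrix.charmatrix_apply_eq]
      · simp [Matrix.charmatrix_apply_ne _ _ _ hij, Matrix.diagonal_apply_ne _ hij]
    rw [RingHom.mapMatrix_apply, h2] at h1
    exact h1
  obtain ⟨v, hv0, hv⟩ := (Matrix.exists_mulVec_eq_zero_iff).mpr hdet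
  refine ⟨v, hv0, ?_⟩
  have := hv
  rw [Matrix.sub_mulVec] at this
  have hdiag : (Matrix.diagonal (fun _ : n => μ)).mulVec v = μ • v := by
    ext i; simp [Matrix.mulVec_diagonal]
  have := sub_eq_zero.mp this
  rw [hdiag] at this
  exact this.symm

/-- Weighted row-sum bound gives eigenvalue bound. -/
lemma eig_bound {n : Type*} [Fintype n] [DecidableEq n]
    (D : Matrix n n ℝ) (hD : ∀ i j, 0 ≤ D i j)
    (x : n → ℝ) (hx : ∀ i, 0 < x i) (θ : ℝ)
    (hrow : ∀ i, ∑ j, D i j * x j ≤ θ * x i)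
    {μ : ℂ} (h : ((D.map Complex.ofReal).charpoly).IsRoot μ) :
    ‖μ‖ ≤ θ := by
  obtain ⟨v, hv0, hv⟩ := exists_eigvec_of_charpoly_root (D.map Complex.ofReal) h
  obtain ⟨k, hk⟩ := Function.ne_iff.mp hv0
  have hne : (Finset.univ : Finset n).Nonempty := ⟨k, mem_univ k⟩
  obtain ⟨i, -, hi⟩ := Finset.exists_max_image univ
    (fun j => ‖v j‖ / x j) hne
  set t : ℝ := ‖v i‖ / x i with ht
  have hxi := hx i
  have htpos : 0 < t := by
    have hk' : 0 < ‖v k‖ / x k :=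
      div_pos (by simpa using hk) (hx k)
    exact lt_of_lt_of_le hk' (hi k (mem_univ k))
  have hvj : ∀ j, ‖v j‖ ≤ t * x j := by
    intro j
    have h1 := hi j (mem_univ j)
    rw [ht] at h1 ⊢
    rw [div_le_div_iff₀ (hx j) hxi] at h1
    rw [div_mul_eq_mul_div, le_div_iff₀ hxi]
    linarith
  have hvi : ‖v i‖ = t * x i := by
    rw [ht, div_mul_cancel₀ _ (ne_of_gt hxi)]
  have hmain : ‖μ‖ * (t * x i) ≤ t * (θ * x i) := by
    have h1 : (D.map Complex.ofReal *ᵥ v) i = μ * v i := by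
      rw [hv]; rfl
    have h2 : ‖μ * v i‖ ≤ t * ∑ j, D i j * x j := by
      rw [← h1]
      calc ‖∑ j, (D.map Complex.ofReal) i j * v j‖
          ≤ ∑ j, ‖(D.map Complex.ofReal) i j * v j‖ :=
            norm_sum_le _ _
        _ = ∑ j, D i j * ‖v j‖ := by
            refine Finset.sum_congr rfl fun j _ => ?_
            rw [norm_mul]
            simp [Matrix.map_apply, Complex.norm_real, abs_of_nonneg (hD i j)]
        _ ≤ ∑ j, D i j * (t * x j) :=
            Finset.sum_le_sum fun j _ =>
              mul_le_mul_of_nonneg_left (hvj j) (hD i j)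
        _ = t * ∑ j, D i j * x j := by
            rw [Finset.mul_sum]; exact Finset.sum_congr rfl fun j _ => by ring
    calc ‖μ‖ * (t * x i) = ‖μ * v i‖ := by
          rw [norm_mul, hvi]
      _ ≤ t * ∑ j, D i j * x j := h2
      _ ≤ t * (θ * x i) := by
          exact mul_le_mul_of_nonneg_left (hrow i) (le_of_lt htpos)
  have hxt : 0 < t * x i := mul_pos htpos hxi
  have : ‖μ‖ * (t * x i) ≤ θ * (t * x i) := by
    calc ‖μ‖ * (t * x i) ≤ t * (θ * x i) := hmain
      _ = θ * (t * x i) := by ring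
  exact le_of_mul_le_mul_right this hxt

/-- Diagonal-dominance bound: if `⟨M⟩ x = y > 0` with `x > 0`, and `|c| ≤ θ y`,
then `|M⁻¹ c| ≤ θ x`. -/
lemma inv_bound {n : Type*} [Fintype n] [DecidableEq n]
    (M : Matrix n n ℝ) (hM : IsUnit M.det)
    (x : n → ℝ) (hx : ∀ i, 0 < x i)
    (y : n → ℝ) (hy : ∀ i, 0 < y i) (hyx : ∀ i, (compMat M).mulVec x i = y i)
    (θ : ℝ) (c : n → ℝ) (hc : ∀ k, |c k| ≤ θ * y k) :
    ∀ j, |(M⁻¹.mulVec c) j| ≤ θ * x j := by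
  intro j0
  have hne : (Finset.univ : Finset n).Nonempty := ⟨j0, mem_univ j0⟩
  set z : n → ℝ := M⁻¹.mulVec c with hz
  have hMz : M.mulVec z = c := by
    rw [hz, Matrix.mulVec_mulVec, Matrix.mul_nonsing_inv M hM, Matrix.one_mulVec]
  obtain ⟨i, -, hi⟩ := Finset.exists_max_image univ (fun j => |z j| / x j) hne
  set t : ℝ := |z i| / x i with ht
  have hxi := hx i
  have hzj : ∀ j, |z j| ≤ t * x j := by
    intro j
    have h1 := hi j (mem_univ j)
    rw [ht] at h1 ⊢
    rw [div_le_div_iff₀ (hx j) hxi] at h1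
    rw [div_mul_eq_mul_div, le_div_iff₀ hxi]
    linarith
  have hzi : |z i| = t * x i := by rw [ht, div_mul_cancel₀ _ (ne_of_gt hxi)]
  -- y i = |M i i| * x i - ∑_{j ≠ i} |M i j| * x j
  have hyi : y i = |M i i| * x i - ∑ j ∈ univ.erase i, |M i j| * x j := by
    rw [← hyx i]
    unfold Matrix.mulVec dotProduct
    rw [← Finset.add_sum_erase _ _ (mem_univ i)]
    have h2 : ∀ j ∈ univ.erase i, compMat M i j * x j = -(|M i j| * x j) := by
      intro j hj
      have : i ≠ j := fun h => (Finset.mem_erase.mp hj).1 h.symm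
      simp [compMat, this, neg_mul]
    rw [Finset.sum_congr rfl h2, Finset.sum_neg_distrib]
    simp [compMat]
    ring
  -- lower bound for |c i|
  have hlow : t * y i ≤ |c i| := by
    have hci : c i = M i i * z i + ∑ j ∈ univ.erase i, M i j * z j := by
      rw [← hMz]
      unfold Matrix.mulVec dotProduct
      rw [← Finset.add_sum_erase _ _ (mem_univ i)]
    have habs : |∑ j ∈ univ.erase i, M i j * z j| ≤ ∑ j ∈ univ.erase i, |M i j| * (t * x j) := by
      calc |∑ j ∈ univ.erase i, M i j * z j| ≤ ∑ j ∈ univ.erase i, |M i j * z j| :=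
            Finset.abs_sum_le_sum_abs _ _
        _ ≤ ∑ j ∈ univ.erase i, |M i j| * (t * x j) := by
            refine Finset.sum_le_sum fun j _ => ?_
            rw [abs_mul]
            exact mul_le_mul_of_nonneg_left (hzj j) (abs_nonneg _)
    have h3 : |M i i * z i| ≤ |c i| + |∑ j ∈ univ.erase i, M i j * z j| := by
      calc |M i i * z i| = |c i - ∑ j ∈ univ.erase i, M i j * z j| := by
            rw [hci]; ring_nf
        _ ≤ |c i| + |∑ j ∈ univ.erase i, M i j * z j| := abs_sub _ _
    have h4 : |M i i * z i| = |M i i| * (t * x i) := by rw [abs_mul, hzi]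
    have h5 : ∑ j ∈ univ.erase i, |M i j| * (t * x j)
        = t * ∑ j ∈ univ.erase i, |M i j| * x j := by
      rw [Finset.mul_sum]; exact Finset.sum_congr rfl fun j _ => by ring
    rw [h4] at h3
    have := habs
    rw [h5] at this
    have h6 : t * y i = |M i i| * (t * x i) - t * ∑ j ∈ univ.erase i, |M i j| * x j := by
      rw [hyi]; ring
    linarith
  have htθ : t ≤ θ := by
    have := (hlow.trans (hc i))
    exact le_of_mul_le_mul_right (by linarith [this]) (hy i)
  calc |z j0| ≤ t * x j0 := hzj j0
    _ ≤ θ * x j0 := mul_le_mul_of_nonneg_right htθ (le_of_lt (hx j0))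

/-- If `A = M - N` is an H-splitting (`M` nonsingular and `⟨M⟩ - |N|` an M-matrix), then
`ρ(|I - M⁻¹ A|) < 1`. -/
theorem h_splitting_spectral_radius_lt_one
    {n : Type*} [Fintype n] [DecidableEq n]
    (A M N : Matrix n n ℝ)
    (hMN : A = M - N)
    (hM : IsUnit M.det)
    (hH : IsMMatrix (compMat M - Matrix.of fun i j => |N i j|)) :
    specRad (Matrix.of fun i j => |((1 : Matrix n n ℝ) - M⁻¹ * A) i j|) < 1 := by
  classical
  cases isEmpty_or_nonempty n with
  | inl hE =>
    have hempty : {r : ℝ | ∃ μ : ℂ,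
        (((Matrix.of fun i j => |((1 : Matrix n n ℝ) - M⁻¹ * A) i j|).map
          Complex.ofReal).charpoly).IsRoot μ ∧ r = ‖μ‖} = ∅ := by
      ext r
      simp only [Set.mem_setOf_eq, Set.mem_empty_iff_false, iff_false, not_exists]
      intro μ hμ
      have h1 : (((Matrix.of fun i j => |((1 : Matrix n n ℝ) - M⁻¹ * A) i j|).map
          Complex.ofReal).charpoly) = 1 := by
        rw [Matrix.charpoly, Matrix.det_isEmpty]
      rw [h1] at hμ
      have := hμ.1
      simp [Polynomial.IsRoot] at this
    rw [specRad, hempty, Real.sSup_empty]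
    norm_num
  | inr hNe =>
    obtain ⟨hBdet, hBoff, hBinv⟩ := hH
    set Nabs : Matrix n n ℝ := Matrix.of fun i j => |N i j| with hNabs
    set B : Matrix n n ℝ := compMat M - Nabs with hB
    set x : n → ℝ := B⁻¹.mulVec (fun _ => 1) with hxdef
    -- x > 0
    have hxnn : ∀ i j, 0 ≤ B⁻¹ i j := hBinv
    have hx : ∀ i, 0 < x i := by
      intro i
      have hsum : x i = ∑ j, B⁻¹ i j := by
        simp [hxdef, Matrix.mulVec, dotProduct]
      rw [hsum]
      rcases lt_or_eq_of_le (Finset.sum_nonneg fun j _ => hxnn i j) with h | h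
      · exact h
      · exfalso
        have hall : ∀ j ∈ (univ : Finset n), B⁻¹ i j = 0 := by
          rw [← Finset.sum_eq_zero_iff_of_nonneg fun j _ => hxnn i j]
          exact h.symm
        have h1 : (B⁻¹ * B) i i = 0 := by
          rw [Matrix.mul_apply]
          exact Finset.sum_eq_zero fun j _ => by rw [hall j (mem_univ j), zero_mul]
        rw [Matrix.nonsing_inv_mul B hBdet] at h1
        simp at h1
    -- B x = 1
    have hBx : ∀ i, B.mulVec x i = 1 := by
      intro i
      rw [hxdef, Matrix.mulVec_mulVec, Matrix.mul_nonsing_inv B hBdet, Matrix.one_mulVec]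
    set y : n → ℝ := (compMat M).mulVec x with hydef
    have hyN : ∀ i, y i = (∑ j, |N i j| * x j) + 1 := by
      intro i
      have h1 := hBx i
      rw [hB, Matrix.sub_mulVec] at h1
      have h2 : Nabs.mulVec x i = ∑ j, |N i j| * x j := by
        simp [hNabs, Matrix.mulVec, dotProduct]
      have h3 : ((compMat M).mulVec x - Nabs.mulVec x) i
          = y i - Nabs.mulVec x i := rfl
      rw [h3, h2] at h1
      linarith
    have hNxnn : ∀ i, 0 ≤ ∑ j, |N i j| * x j :=
      fun i => Finset.sum_nonneg fun j _ => mul_nonneg (abs_nonneg _) (le_of_lt (hx j))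
    have hy : ∀ i, 0 < y i := fun i => by
      have := hNxnn i; rw [hyN i]; linarith
    -- θ
    have hne : (Finset.univ : Finset n).Nonempty := univ_nonempty
    set θ₀ : ℝ := univ.sup' hne (fun i => (y i - 1) / y i) with hθ₀
    set θ : ℝ := max θ₀ 0 with hθdef
    have hθ0 : 0 ≤ θ := le_max_right _ _
    have hθ1 : θ < 1 := by
      rw [hθdef, max_lt_iff]
      constructor
      · rw [hθ₀, Finset.sup'_lt_iff]
        intro i _
        rw [div_lt_one (hy i)]
        linarith
      · norm_num
    -- |N| x ≤ θ y
    have hNx : ∀ k, ∑ j, |N k j| * x j ≤ θ * y k := by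
      intro k
      have h1 : (y k - 1) / y k ≤ θ := by
        have h0 : (y k - 1) / y k ≤ θ₀ := by
          rw [hθ₀]; exact Finset.le_sup' (fun i => (y i - 1) / y i) (mem_univ k)
        exact h0.trans (le_max_left _ _)
      have h2 : y k - 1 ≤ θ * y k := by
        rw [div_le_iff₀ (hy k)] at h1
        linarith
      rw [hyN k] at h2 ⊢
      linarith
    -- T = M⁻¹ * N
    set T : Matrix n n ℝ := (1 : Matrix n n ℝ) - M⁻¹ * A with hTdef
    have hT : T = M⁻¹ * N := by
      rw [hTdef, hMN, Matrix.mul_sub, Matrix.nonsing_inv_mul M hM]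
      abel
    -- row bound for |T|
    have hrow : ∀ i, ∑ j, |T i j| * x j ≤ θ * x i := by
      intro i
      set s : n → ℝ := fun j => if 0 ≤ T i j then 1 else -1 with hs
      set w : n → ℝ := fun j => s j * x j with hw
      set c : n → ℝ := N.mulVec w with hc
      have habsw : ∀ j, |w j| = x j := by
        intro j
        rw [hw]
        simp only
        rw [abs_mul, abs_of_pos (hx j)]
        by_cases h : 0 ≤ T i j <;> simp [hs, h]
      have hck : ∀ k, |c k| ≤ θ * y k := by
        intro k
        have h1 : |c k| ≤ ∑ j, |N k j| * x j := by
          rw [hc]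
          calc |N.mulVec w k| = |∑ j, N k j * w j| := by
                simp [Matrix.mulVec, dotProduct]
            _ ≤ ∑ j, |N k j * w j| := Finset.abs_sum_le_sum_abs _ _
            _ = ∑ j, |N k j| * x j := by
                refine Finset.sum_congr rfl fun j _ => ?_
                rw [abs_mul, habsw j]
        exact h1.trans (hNx k)
      have hkey := inv_bound M hM x hx y hy (fun i => rfl) θ c hck i
      have hTc : M⁻¹.mulVec c = T.mulVec w := by
        rw [hc, Matrix.mulVec_mulVec, ← hT]
      have hTw : T.mulVec w i = ∑ j, |T i j| * x j := by
        simp only [Matrix.mulVec, dotProduct]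
        refine Finset.sum_congr rfl fun j _ => ?_
        rw [hw]
        simp only
        by_cases h : 0 ≤ T i j
        · simp [hs, h, abs_of_nonneg h]
        · push_neg at h
          simp only [hs, not_le.mpr h, if_false, abs_of_neg h]
          ring
      rw [hTc, hTw] at hkey
      calc ∑ j, |T i j| * x j ≤ |∑ j, |T i j| * x j| := le_abs_self _
        _ ≤ θ * x i := hkey
    -- finish
    rw [specRad]
    refine lt_of_le_of_lt (Real.sSup_le ?_ hθ0) hθ1
    rintro r ⟨μ, hμ, rfl⟩
    refine eig_bound (Matrix.of fun i j => |T i j|) (fun i j => abs_nonneg _) x hx θ ?_ hμ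
    intro i
    simpa using hrow i
end
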